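/- arXiv:2011.00197 — 5 statements merged into one kernel-verified Lean document; each statement's English description precedes it below -/
import Mathlib

section
/- Let S be a stabilizer group on n qubits. Let Γ be the union, over all elements ±E(a,b) ∈ S, of supp(a) (the supports of the X-components of stabilizers), and let G be the simple graph on vertex set Γ in which distinct vertices i and j are adjacent if and only if ε′E(0, e_i + e_j) ∈ S for some sign ε′ ∈ {±1}. Let Γ₁, …, Γ_t be the connected components of G and N_k = |Γ_k|. Let y ∈ F₂ⁿ be any vector such that every pure-Z element ε_v E(0,v) ∈ S has sign ε_v = (−1)^{y·v} (such a y exists). Then the transversal π/2^l Z-rotation exp(i(π/2^l)Z)^{⊗n} preserves the code space V(S) for every integer l ≥ 2 if and only if for every element ±E(a,b) ∈ S with a ≠ 0: (1) supp(a) equals the (disjoint) union of those connected components Γ_k with Γ_k ⊆ supp(a); and (2) for every k with Γ_k ⊆ supp(a), N_k is even and w_H(y|_{Γ_k}) = N_k/2. -/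
open Matrix Finset

/-- The Pauli matrix `D(a,b) = X^{a₁}Z^{b₁} ⊗ ⋯ ⊗ X^{aₙ}Z^{bₙ}`, acting on `ℂ^{2ⁿ}` with the
standard basis indexed by `F₂ⁿ`: `D(a,b)|v⟩ = (−1)^{b·v} |v + a⟩`. -/
noncomputable def PauliD (n : ℕ) (a b : Fin n → ZMod 2) :
    Matrix (Fin n → ZMod 2) (Fin n → ZMod 2) ℂ := fun u v =>
  (if u = v + a then (1 : ℂ) else 0) * (-1 : ℂ) ^ (b ⬝ᵥ v).val

/-- The Hermitian Pauli matrix `E(a,b) = i^{a·b mod 4} D(a,b)` (with `a·b` the integer inner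
product of the `0/1` lifts; note `i^{k mod 4} = i^k` in `ℂ`). -/
noncomputable def PauliE (n : ℕ) (a b : Fin n → ZMod 2) :
    Matrix (Fin n → ZMod 2) (Fin n → ZMod 2) ℂ :=
  (Complex.I ^ (∑ i, (a i).val * (b i).val)) • PauliD n a b

/-- The transversal `θ` Z-rotation `exp(iθZ)^{⊗n}` on `ℂ^{2ⁿ}`: under the identification of
the standard basis of `ℂ^{2ⁿ}` with `F₂ⁿ`, the `n`-fold Kronecker power of
`exp(iθZ) = diag(e^{iθ}, e^{−iθ})` is the diagonal matrix with `(v,v)` entry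
`∏ i, exp(iθ·(−1)^{v i})`. -/
noncomputable def transversalZRot (n : ℕ) (θ : ℝ) :
    Matrix (Fin n → ZMod 2) (Fin n → ZMod 2) ℂ :=
  Matrix.diagonal fun v => ∏ i, Complex.exp (Complex.I * θ * (-1 : ℂ) ^ ((v i).val))

/-- `Γ`: the union, over all elements `±E(a,b)` of `S`, of the supports of the
`X`-components `a`. -/
def GammaSet (n : ℕ) (S : Set (Matrix (Fin n → ZMod 2) (Fin n → ZMod 2) ℂ)) :
    Set (Fin n) :=
  {i | ∃ (ε : ℂ) (a b : Fin n → ZMod 2), (ε = 1 ∨ ε = -1) ∧ ε • PauliE n a b ∈ S ∧ a i ≠ 0}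

namespace Obl

variable {n : ℕ}

lemma zmod2_cases (x : ZMod 2) : x = 0 ∨ x = 1 := by revert x; decide

lemma add_self (a : Fin n → ZMod 2) : a + a = 0 := by
  funext i; rcases zmod2_cases (a i) with h|h <;> simp [h]
  · rfl

lemma add_add_self (u a : Fin n → ZMod 2) : u + a + a = u := by
  rw [add_assoc, add_self, add_zero]

lemma sgnZ_add (x y : ZMod 2) : ((-1:ℤ))^((x+y).val) = (-1)^(x.val) * (-1)^(y.val) := by
  revert x y; decide

lemma sgnZ_one_add (x : ZMod 2) : ((-1:ℤ))^((1+x).val) = -((-1))^(x.val) := by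
  revert x; decide

lemma sgnC_ofZ (k : ℕ) : ((-1:ℂ))^k = (((-1:ℤ))^k : ℤ) := by push_cast; ring

lemma sgnC_add (x y : ZMod 2) : ((-1:ℂ))^((x+y).val) = (-1)^(x.val) * (-1)^(y.val) := by
  rw [sgnC_ofZ, sgnC_ofZ, sgnC_ofZ, sgnZ_add]; push_cast; ring

lemma sgnZ_sq (x : ZMod 2) : ((-1:ℤ))^(x.val) * (-1)^(x.val) = 1 := by revert x; decide

lemma sgnC_sq (x : ZMod 2) : ((-1:ℂ))^(x.val) * (-1)^(x.val) = 1 := by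
  rw [sgnC_ofZ, ← Int.cast_mul, sgnZ_sq]; norm_num

lemma sgnC_natCast (m : ℕ) : ((-1:ℂ))^(((m : ZMod 2)).val) = (-1)^m := by
  rw [ZMod.val_natCast]
  exact (neg_one_pow_eq_pow_mod_two m).symm

lemma dotProduct_val (a b : Fin n → ZMod 2) :
    ((-1:ℂ))^((a ⬝ᵥ b).val) = (-1)^(∑ i, (a i).val * (b i).val) := by
  have : a ⬝ᵥ b = ((∑ i, (a i).val * (b i).val : ℕ) : ZMod 2) := by
    unfold dotProduct
    push_cast
    refine Finset.sum_congr rfl fun i _ => ?_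
    rw [ZMod.natCast_val, ZMod.natCast_val, ZMod.cast_id, ZMod.cast_id]
  rw [this, sgnC_natCast]

lemma mulVec_eq_sum (M : Matrix (Fin n → ZMod 2) (Fin n → ZMod 2) ℂ)
    (ψ : (Fin n → ZMod 2) → ℂ) (u : Fin n → ZMod 2) :
    M.mulVec ψ u = ∑ v, M u v * ψ v := rfl

lemma pauliE_apply (a b u v : Fin n → ZMod 2) :
    PauliE n a b u v = (Complex.I ^ (∑ i, (a i).val * (b i).val)) *
      ((if u = v + a then (1:ℂ) else 0) * (-1 : ℂ) ^ (b ⬝ᵥ v).val) := rfl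

lemma pauliE_mulVec (a b : Fin n → ZMod 2) (ψ : (Fin n → ZMod 2) → ℂ) (u : Fin n → ZMod 2) :
    (PauliE n a b).mulVec ψ u =
      (Complex.I ^ (∑ i, (a i).val * (b i).val)) * ((-1 : ℂ) ^ (b ⬝ᵥ (u+a)).val) * ψ (u + a) := by
  rw [mulVec_eq_sum, Finset.sum_eq_single (u + a)]
  · rw [pauliE_apply, add_add_self, if_pos rfl]; ring
  · intro v _ hv
    rw [pauliE_apply, if_neg]
    · ring
    · intro h; apply hv; rw [h, add_add_self]
  · intro h; exact absurd (Finset.mem_univ _) h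

end Obl

namespace Obl2
open Obl

variable {n : ℕ}

lemma pauliE_mul_apply (a b a' b' u w : Fin n → ZMod 2) :
    (PauliE n a b * PauliE n a' b') u w =
      (Complex.I ^ (∑ i, (a i).val * (b i).val)) *
      (Complex.I ^ (∑ i, (a' i).val * (b' i).val)) *
      ((if u = w + a' + a then (1:ℂ) else 0) *
        ((-1:ℂ)^((b ⬝ᵥ (w + a')).val) * (-1:ℂ)^((b' ⬝ᵥ w).val))) := by
  rw [Matrix.mul_apply, Finset.sum_eq_single (w + a')]
  · rw [pauliE_apply, pauliE_apply, if_pos rfl]; ring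
  · intro x _ hx
    rw [pauliE_apply (a := a'), if_neg hx]
    ring
  · intro h; exact absurd (Finset.mem_univ _) h

lemma pauliE_zero_zero : PauliE n 0 0 = 1 := by
  funext u w
  rw [pauliE_apply]
  simp [Matrix.one_apply, dotProduct]

lemma I_pow_ne_zero (m : ℕ) : (Complex.I : ℂ) ^ m ≠ 0 := pow_ne_zero _ Complex.I_ne_zero

lemma I_pow_sq (m : ℕ) : (Complex.I:ℂ)^m * Complex.I^m = (-1:ℂ)^m := by
  rw [← pow_add, ← two_mul, pow_mul, Complex.I_sq]

lemma val_mul_comm (a b : Fin n → ZMod 2) :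
    ∑ i, (a i).val * (b i).val = ∑ i, (b i).val * (a i).val :=
  Finset.sum_congr rfl fun i _ => Nat.mul_comm _ _

lemma sgnC_dot_symm (a b : Fin n → ZMod 2) :
    ((-1:ℂ))^((b ⬝ᵥ a).val) = (-1:ℂ)^(∑ i, (a i).val * (b i).val) := by
  rw [dotProduct_val, val_mul_comm]

lemma pauliE_sq (a b : Fin n → ZMod 2) : PauliE n a b * PauliE n a b = 1 := by
  funext u w
  rw [pauliE_mul_apply, add_add_self, Matrix.one_apply, dotProduct_add, sgnC_add]
  rw [sgnC_dot_symm a b, I_pow_sq]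
  by_cases h : u = w
  · simp only [if_pos h]
    rw [one_mul, mul_right_comm ((-1:ℂ)^((b ⬝ᵥ w).val)), sgnC_sq, one_mul,
      ← pow_add, ← two_mul, pow_mul]
    norm_num
  · simp only [if_neg h]
    ring

lemma pauliE_mul_Z (v w' : Fin n → ZMod 2) :
    PauliE n 0 v * PauliE n 0 w' = PauliE n 0 (v + w') := by
  funext u w
  rw [pauliE_mul_apply, pauliE_apply]
  simp only [Pi.zero_apply, ZMod.val_zero, Nat.zero_mul, Finset.sum_const_zero, pow_zero,
    one_mul, add_zero]
  rw [add_dotProduct, sgnC_add]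

lemma dot_eq_zero_of_comm (a b v : Fin n → ZMod 2)
    (h : PauliE n a b * PauliE n 0 v = PauliE n 0 v * PauliE n a b) : v ⬝ᵥ a = 0 := by
  have he := congrFun (congrFun h a) 0
  rw [pauliE_mul_apply, pauliE_mul_apply] at he
  simp only [Pi.zero_apply, ZMod.val_zero, Nat.zero_mul, Finset.sum_const_zero, pow_zero,
    zero_add, add_zero, dotProduct_zero, zero_dotProduct, if_pos rfl,
    one_mul, mul_one, if_true] at he
  have hne := I_pow_ne_zero (∑ i, (a i).val * (b i).val)
  rcases zmod2_cases (v ⬝ᵥ a) with hh | hh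
  · exact hh
  · exfalso
    rw [hh] at he
    simp only [ZMod.val_one, pow_one, mul_neg_one] at he
    apply hne
    have h2 : (2:ℂ) * Complex.I ^ (∑ i, (a i).val * (b i).val) = 0 := by linear_combination he
    have := mul_eq_zero.mp h2
    simpa using this

end Obl2

namespace Obl3
open Obl Obl2

variable {n : ℕ}

def suppF (a : Fin n → ZMod 2) : Finset (Fin n) := Finset.univ.filter (fun i => a i ≠ 0)

noncomputable def sgnSum (a u : Fin n → ZMod 2) : ℤ := ∑ k ∈ suppF a, (-1:ℤ)^((u k).val)

noncomputable def totSum (u : Fin n → ZMod 2) : ℤ := ∑ i, (-1:ℤ)^((u i).val)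

lemma totSum_add (u a : Fin n → ZMod 2) : totSum (u + a) = totSum u - 2 * sgnSum a u := by
  unfold totSum sgnSum suppF
  rw [← Finset.sum_filter_add_sum_filter_not Finset.univ (fun i => a i ≠ 0)
      (fun i => ((-1:ℤ))^(((u+a) i).val)),
    ← Finset.sum_filter_add_sum_filter_not Finset.univ (fun i => a i ≠ 0)
      (fun i => ((-1:ℤ))^((u i).val))]
  have h1 : ∑ i ∈ Finset.univ.filter (fun i => a i ≠ 0), ((-1:ℤ))^(((u+a) i).val)
      = ∑ i ∈ Finset.univ.filter (fun i => a i ≠ 0), (-((-1:ℤ))^((u i).val)) := by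
    refine Finset.sum_congr rfl fun i hi => ?_
    rw [Finset.mem_filter] at hi
    rcases zmod2_cases (a i) with h|h
    · exact absurd h hi.2
    · show ((-1:ℤ))^((u i + a i).val) = _
      rw [h, add_comm, sgnZ_one_add]
  have h2 : ∑ i ∈ Finset.univ.filter (fun i => ¬ a i ≠ 0), ((-1:ℤ))^(((u+a) i).val)
      = ∑ i ∈ Finset.univ.filter (fun i => ¬ a i ≠ 0), ((-1:ℤ))^((u i).val) := by
    refine Finset.sum_congr rfl fun i hi => ?_
    rw [Finset.mem_filter] at hi
    have h := not_not.mp hi.2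
    show ((-1:ℤ))^((u i + a i).val) = _
    rw [h, add_zero]
  rw [h1, h2, Finset.sum_neg_distrib]
  ring

lemma sgnSum_abs_le (a u : Fin n → ZMod 2) : |sgnSum a u| ≤ (n:ℤ) := by
  unfold sgnSum
  calc |∑ k ∈ suppF a, (-1:ℤ)^((u k).val)| ≤ ∑ k ∈ suppF a, |(-1:ℤ)^((u k).val)| :=
        Finset.abs_sum_le_sum_abs _ _
    _ ≤ ∑ _k ∈ suppF a, 1 := by
        refine Finset.sum_le_sum fun k _ => ?_
        rcases zmod2_cases (u k) with h|h <;> rw [h] <;> norm_num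
    _ = (suppF a).card := by rw [Finset.sum_const, nsmul_eq_mul, mul_one]
    _ ≤ (n:ℤ) := by
        have := Finset.card_le_card (Finset.filter_subset (fun i => a i ≠ 0) Finset.univ)
        simp only [Finset.card_univ, Fintype.card_fin] at this
        exact_mod_cast this

lemma rot_mulVec (θ : ℝ) (ψ : (Fin n → ZMod 2) → ℂ) (u : Fin n → ZMod 2) :
    (transversalZRot n θ).mulVec ψ u
      = Complex.exp (Complex.I * θ * (totSum u : ℤ)) * ψ u := by
  unfold transversalZRot
  rw [Matrix.mulVec_diagonal]
  congr 1
  rw [← Complex.exp_sum]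
  congr 1
  unfold totSum
  push_cast
  rw [Finset.mul_sum]

lemma exp_tot_eq (l : ℕ) (hl : n + 2 ≤ l) (t₁ t₂ : ℤ)
    (h : Complex.exp (Complex.I * ((Real.pi / 2 ^ l : ℝ)) * (t₁:ℂ))
        = Complex.exp (Complex.I * ((Real.pi / 2 ^ l : ℝ)) * (t₂:ℂ)))
    (hd : ∃ d : ℤ, t₁ - t₂ = 2 * d ∧ |d| ≤ (n:ℤ)) : t₁ = t₂ := by
  obtain ⟨d, hdd, hdle⟩ := hd
  rw [Complex.exp_eq_exp_iff_exists_int] at h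
  obtain ⟨k, hk⟩ := h
  -- derive real equation
  have hre : (Real.pi / 2 ^ l) * ((t₁:ℝ) - t₂) = k * (2 * Real.pi) := by
    have h2 : (Complex.I * ((Real.pi / 2 ^ l : ℝ))) * ((t₁:ℂ) - t₂)
        = Complex.I * ((k:ℂ) * (2 * (Real.pi:ℂ))) := by
      rw [mul_sub]
      rw [mul_comm (Complex.I * ((Real.pi / 2 ^ l : ℝ))) (t₂:ℂ)] at hk
      ring_nf
      ring_nf at hk
      linear_combination hk
    have h3 : ((Real.pi / 2 ^ l : ℝ) : ℂ) * ((t₁:ℂ) - t₂) = (k:ℂ) * (2 * (Real.pi:ℂ)) :=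
      mul_left_cancel₀ Complex.I_ne_zero (by rw [← mul_assoc]; exact h2)
    exact_mod_cast h3
  have hpi := Real.pi_ne_zero
  have h4 : (t₁:ℝ) - t₂ = k * 2 ^ (l+1) := by
    have h2l : (2:ℝ)^l ≠ 0 := by positivity
    field_simp at hre
    apply mul_left_cancel₀ hpi
    rw [hre]
    ring
  have h5 : t₁ - t₂ = k * 2 ^ (l+1) := by exact_mod_cast h4
  have hk0 : k = 0 := by
    by_contra hk0
    have h1le : (1:ℤ) ≤ |k| := Int.one_le_abs (by exact_mod_cast hk0)
    have : (2:ℤ)^(l+1) ≤ |t₁ - t₂| := by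
      rw [h5, abs_mul, abs_pow]
      calc (2:ℤ)^(l+1) = 1 * |(2:ℤ)|^(l+1) := by norm_num
        _ ≤ |k| * |(2:ℤ)|^(l+1) := by
            apply mul_le_mul_of_nonneg_right h1le (by positivity)
    have hb : |t₁ - t₂| ≤ 2 * (n:ℤ) := by
      rw [hdd, abs_mul]
      have : |(2:ℤ)| = 2 := by norm_num
      rw [this]
      linarith
    have hgrow : 2 * (n:ℤ) < 2^(l+1) := by
      have hn : 2*n < 2^(l+1) := by
        calc 2*n < 2*2^n := by have := Nat.lt_two_pow_self (n := n); omega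
          _ = 2^(n+1) := by ring
          _ ≤ 2^(l+1) := Nat.pow_le_pow_right (by norm_num) (by omega)
      exact_mod_cast hn
    omega
  rw [hk0] at h5; simp at h5; omega

end Obl3

namespace Obl4
open Obl Obl2 Obl3

variable {n : ℕ}

/-- membership of a pure-Z Pauli in S -/
def Zmem (n : ℕ) (S : Set (Matrix (Fin n → ZMod 2) (Fin n → ZMod 2) ℂ))
    (v : Fin n → ZMod 2) : Prop :=
  ∃ ε : ℂ, (ε = 1 ∨ ε = -1) ∧ ε • PauliE n 0 v ∈ S

variable {S : Set (Matrix (Fin n → ZMod 2) (Fin n → ZMod 2) ℂ)}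

lemma sign_ne_zero {ε : ℂ} (h : ε = 1 ∨ ε = -1) : ε ≠ 0 := by
  rcases h with h|h <;> rw [h] <;> norm_num

lemma sign_mul {ε ε' : ℂ} (h : ε = 1 ∨ ε = -1) (h' : ε' = 1 ∨ ε' = -1) :
    ε * ε' = 1 ∨ ε * ε' = -1 := by
  rcases h with h|h <;> rcases h' with h'|h' <;> rw [h, h'] <;> norm_num

lemma smul_mul_smul_mat (ε ε' : ℂ) (M N : Matrix (Fin n → ZMod 2) (Fin n → ZMod 2) ℂ) :
    (ε • M) * (ε' • N) = (ε * ε') • (M * N) := by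
  rw [smul_mul_assoc, mul_smul_comm, smul_smul]

lemma Zmem_zero (hone : (1 : Matrix (Fin n → ZMod 2) (Fin n → ZMod 2) ℂ) ∈ S) :
    Zmem n S 0 :=
  ⟨1, Or.inl rfl, by rw [one_smul, pauliE_zero_zero]; exact hone⟩

lemma Zmem_add (hmul : ∀ g ∈ S, ∀ h ∈ S, g * h ∈ S) {v w : Fin n → ZMod 2}
    (hv : Zmem n S v) (hw : Zmem n S w) : Zmem n S (v + w) := by
  obtain ⟨ε, hs, hm⟩ := hv
  obtain ⟨ε', hs', hm'⟩ := hw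
  refine ⟨ε * ε', sign_mul hs hs', ?_⟩
  have := hmul _ hm _ hm'
  rwa [smul_mul_smul_mat, pauliE_mul_Z] at this

lemma dot_zero (hcomm : ∀ g ∈ S, ∀ h ∈ S, g * h = h * g)
    {ε : ℂ} {a b : Fin n → ZMod 2} (hs : ε = 1 ∨ ε = -1) (hmem : ε • PauliE n a b ∈ S)
    {v : Fin n → ZMod 2} (hv : Zmem n S v) : v ⬝ᵥ a = 0 := by
  obtain ⟨ε', hs', hm'⟩ := hv
  have hc := hcomm _ hmem _ hm'
  rw [smul_mul_smul_mat, smul_mul_smul_mat, mul_comm ε' ε] at hc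
  have := smul_right_injective (Matrix (Fin n → ZMod 2) (Fin n → ZMod 2) ℂ)
    (sign_ne_zero (sign_mul hs hs')) hc
  exact dot_eq_zero_of_comm a b v this

lemma sq_one (hform : ∀ g ∈ S, ∃ (ε : ℂ) (a b : Fin n → ZMod 2),
      (ε = 1 ∨ ε = -1) ∧ g = ε • PauliE n a b) {g} (hg : g ∈ S) : g * g = 1 := by
  obtain ⟨ε, a, b, hs, rfl⟩ := hform g hg
  rw [smul_mul_smul_mat, pauliE_sq]
  rcases hs with h|h <;> rw [h] <;> norm_num

/-- z + z₀ trick needs: dot with single pairs -/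
lemma dot_pair (z : Fin n → ZMod 2) (i j : Fin n) :
    z ⬝ᵥ (Pi.single i 1 + Pi.single j 1) = z i + z j := by
  rw [dotProduct_add, dotProduct_single, dotProduct_single,
    mul_one, mul_one]

lemma zmod2_add_eq_zero {x y : ZMod 2} (h : x + y = 0) : x = y := by
  revert h; revert x y; decide

lemma zmod2_eq_add_zero {x y : ZMod 2} (h : x = y) : x + y = 0 := by
  subst h; rcases zmod2_cases x with h|h <;> rw [h] <;> rfl

section graph
variable {G : SimpleGraph (Fin n)}

lemma reach_rec {P : Fin n → Fin n → Prop} (hrefl : ∀ i, P i i)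
    (hstep : ∀ i j k, G.Adj i j → P j k → P i k) :
    ∀ i j, G.Reachable i j → P i j := by
  intro i j hr
  obtain ⟨p⟩ := hr
  induction p with
  | nil => exact hrefl _
  | cons h p ih => exact hstep _ _ _ h ih

variable (hG : ∀ i j, G.Adj i j ↔ i ≠ j ∧ i ∈ GammaSet n S ∧ j ∈ GammaSet n S ∧
      ∃ ε : ℂ, (ε = 1 ∨ ε = -1) ∧
        ε • PauliE n 0 (Pi.single i 1 + Pi.single j 1) ∈ S)
include hG

lemma adj_Zmem {i j : Fin n} (h : G.Adj i j) :
    Zmem n S (Pi.single i 1 + Pi.single j 1) := by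
  obtain ⟨-, -, -, ε, hs, hm⟩ := (hG i j).mp h
  exact ⟨ε, hs, hm⟩

lemma eq_on_adj {z : Fin n → ZMod 2} (hz : ∀ v, Zmem n S v → z ⬝ᵥ v = 0)
    {i j : Fin n} (h : G.Adj i j) : z i = z j := by
  have := hz _ (adj_Zmem hG h)
  rw [dot_pair] at this
  exact zmod2_add_eq_zero this

lemma eq_on_reach {z : Fin n → ZMod 2} (hz : ∀ v, Zmem n S v → z ⬝ᵥ v = 0)
    {i j : Fin n} (h : G.Reachable i j) : z i = z j := by
  refine reach_rec (P := fun i j => z i = z j) (fun i => rfl) ?_ i j h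
  intro i j k hadj hjk
  rw [eq_on_adj hG hz hadj, hjk]

lemma reach_Zmem (hone : (1 : Matrix (Fin n → ZMod 2) (Fin n → ZMod 2) ℂ) ∈ S)
    (hmul : ∀ g ∈ S, ∀ h ∈ S, g * h ∈ S)
    {i j : Fin n} (h : G.Reachable i j) :
    Zmem n S (Pi.single i 1 + Pi.single j 1) := by
  obtain ⟨p⟩ := h
  induction p with
  | nil =>
    rename_i u
    have h0 : (Pi.single u 1 : Fin n → ZMod 2) + Pi.single u 1 = 0 := add_self _
    rw [h0]
    exact Zmem_zero hone
  | @cons i j k hadj p ih =>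
    have hsum := Zmem_add hmul (adj_Zmem hG hadj) ih
    have heq : ((Pi.single i 1 : Fin n → ZMod 2) + Pi.single j 1) + ((Pi.single j 1 : Fin n → ZMod 2) + Pi.single k 1)
        = (Pi.single i 1 : Fin n → ZMod 2) + Pi.single k 1 := by
      funext x
      have h4 : ∀ p q r : ZMod 2, (p+q)+(q+r) = p+r := by decide
      exact h4 _ _ _
    rwa [heq] at hsum

lemma Zmem_adj {i k : Fin n} (hik : i ≠ k)
    {ε : ℂ} {a b : Fin n → ZMod 2} (hs : ε = 1 ∨ ε = -1) (hmem : ε • PauliE n a b ∈ S)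
    (hai : a i ≠ 0) (hak : a k ≠ 0)
    (hz : Zmem n S (Pi.single i 1 + Pi.single k 1)) : G.Adj i k := by
  obtain ⟨ε', hs', hm'⟩ := hz
  exact (hG i k).mpr ⟨hik, ⟨ε, a, b, hs, hmem, hai⟩, ⟨ε, a, b, hs, hmem, hak⟩, ε', hs', hm'⟩

end graph

lemma exists_perp (Zs : Set (Fin n → ZMod 2)) (h0 : (0 : Fin n → ZMod 2) ∈ Zs)
    (hadd : ∀ v ∈ Zs, ∀ w ∈ Zs, v + w ∈ Zs) (w : Fin n → ZMod 2) (hw : w ∉ Zs) :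
    ∃ z : Fin n → ZMod 2, (∀ v ∈ Zs, z ⬝ᵥ v = 0) ∧ z ⬝ᵥ w = 1 := by
  classical
  let p : Submodule (ZMod 2) (Fin n → ZMod 2) :=
    { carrier := Zs
      add_mem' := fun hv hw => hadd _ hv _ hw
      zero_mem' := h0
      smul_mem' := by
        intro c v hv
        rcases zmod2_cases c with h|h <;> rw [h]
        · rw [zero_smul]; exact h0
        · rw [one_smul]; exact hv }
  obtain ⟨f, hfw, hfbot⟩ := Submodule.exists_dual_map_eq_bot_of_notMem (p := p) hw inferInstance
  set z : Fin n → ZMod 2 := fun k => f ((Pi.single k 1 : Fin n → ZMod 2)) with hzdef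
  have hf : ∀ v, f v = z ⬝ᵥ v := by
    intro v
    conv_lhs => rw [← Finset.univ_sum_single v]
    rw [map_sum]
    unfold dotProduct
    refine Finset.sum_congr rfl fun k _ => ?_
    have hs : Pi.single k (v k) = (v k) • (Pi.single k 1 : Fin n → ZMod 2) := by
      funext m
      by_cases hm : m = k
      · subst hm; simp
      · simp [Pi.single_eq_of_ne hm]
    rw [hs, _root_.map_smul, smul_eq_mul, hzdef, mul_comm]
  refine ⟨z, fun v hv => ?_, ?_⟩
  · have hv' : f v ∈ p.map f := Submodule.mem_map_of_mem hv
    rw [hfbot] at hv'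
    rw [← hf]
    exact (Submodule.mem_bot (ZMod 2)).mp hv'
  · rw [← hf]
    rcases zmod2_cases (f w) with h|h
    · exact absurd h hfw
    · exact h

end Obl4

namespace Obl5
open Obl Obl2 Obl3 Obl4

variable {n : ℕ} {S : Set (Matrix (Fin n → ZMod 2) (Fin n → ZMod 2) ℂ)}

lemma key_of_lhs
    (hform : ∀ g ∈ S, ∃ (ε : ℂ) (a b : Fin n → ZMod 2),
      (ε = 1 ∨ ε = -1) ∧ g = ε • PauliE n a b)
    (hone : (1 : Matrix (Fin n → ZMod 2) (Fin n → ZMod 2) ℂ) ∈ S)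
    (hmul : ∀ g ∈ S, ∀ h ∈ S, g * h ∈ S)
    (y : Fin n → ZMod 2)
    (hy : ∀ (ε : ℂ) (v : Fin n → ZMod 2), (ε = 1 ∨ ε = -1) →
      ε • PauliE n 0 v ∈ S → ε = (-1 : ℂ) ^ (y ⬝ᵥ v).val)
    (hlhs : ∀ l : ℕ, 2 ≤ l → ∀ ψ : (Fin n → ZMod 2) → ℂ,
      (∀ g ∈ S, g.mulVec ψ = ψ) →
      ∀ g ∈ S, g.mulVec ((transversalZRot n (Real.pi / 2 ^ l)).mulVec ψ)
        = (transversalZRot n (Real.pi / 2 ^ l)).mulVec ψ)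
    {ε : ℂ} {a b : Fin n → ZMod 2} (hs : ε = 1 ∨ ε = -1) (hmem : ε • PauliE n a b ∈ S)
    {z : Fin n → ZMod 2} (hz : ∀ v, Zmem n S v → z ⬝ᵥ v = 0) :
    sgnSum a (y + z) = 0 := by
  classical
  set u : Fin n → ZMod 2 := y + z with hu
  have hSfin : S.Finite := by
    apply Set.Finite.subset (Set.finite_range
      (fun p : Bool × (Fin n → ZMod 2) × (Fin n → ZMod 2) =>
        (if p.1 then (1:ℂ) else -1) • PauliE n p.2.1 p.2.2))
    intro g hg
    obtain ⟨ε', a', b', hs', rfl⟩ := hform g hg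
    rcases hs' with h|h
    · exact ⟨(true, a', b'), by simp [h]⟩
    · exact ⟨(false, a', b'), by simp [h]⟩
  set Sfin := hSfin.toFinset with hSfin_def
  have hmemS : ∀ g, g ∈ Sfin ↔ g ∈ S := fun g => hSfin.mem_toFinset
  set δ : (Fin n → ZMod 2) → ℂ := fun x => if x = u then 1 else 0 with hδ
  set ψ : (Fin n → ZMod 2) → ℂ := fun x => ∑ g ∈ Sfin, g.mulVec δ x with hψ
  have hstab : ∀ h ∈ S, h.mulVec ψ = ψ := by
    intro h hh
    funext x
    have h1 : h.mulVec ψ x = ∑ g ∈ Sfin, (h * g).mulVec δ x := by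
      rw [mulVec_eq_sum]
      calc ∑ v, h x v * ψ v = ∑ v, ∑ g ∈ Sfin, h x v * g.mulVec δ v := by
            refine Finset.sum_congr rfl fun v _ => ?_
            rw [hψ, Finset.mul_sum]
        _ = ∑ g ∈ Sfin, ∑ v, h x v * g.mulVec δ v := Finset.sum_comm
        _ = ∑ g ∈ Sfin, (h * g).mulVec δ x := by
            refine Finset.sum_congr rfl fun g _ => ?_
            rw [← Matrix.mulVec_mulVec, mulVec_eq_sum]
    rw [h1, hψ]
    refine Finset.sum_nbij' (fun g => h * g) (fun g => h * g) ?_ ?_ ?_ ?_ ?_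
    · intro g hg
      rw [hmemS] at hg ⊢
      exact hmul _ hh _ hg
    · intro g hg
      rw [hmemS] at hg ⊢
      exact hmul _ hh _ hg
    · intro g _
      show h * (h * g) = g
      rw [← mul_assoc, sq_one hform hh, one_mul]
    · intro g _
      show h * (h * g) = g
      rw [← mul_assoc, sq_one hform hh, one_mul]
    · intro g _
      rfl
  have hval : ∀ g ∈ S, g.mulVec δ u = 0 ∨ g.mulVec δ u = 1 := by
    intro g hg
    obtain ⟨ε', a', b', hs', rfl⟩ := hform g hg
    rw [Matrix.smul_mulVec, Pi.smul_apply, pauliE_mulVec, smul_eq_mul]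
    by_cases ha' : a' = 0
    · right
      subst ha'
      have hm0 : (∑ i, (((0 : Fin n → ZMod 2)) i).val * (b' i).val) = 0 := by simp
      have hδu : δ (u + 0) = 1 := by rw [add_zero, hδ]; simp
      rw [hm0, pow_zero, hδu, add_zero, mul_one, one_mul]
      have hε' : ε' = (-1 : ℂ) ^ (y ⬝ᵥ b').val := hy ε' b' hs' hg
      have hbz : b' ⬝ᵥ z = 0 := by
        rw [dotProduct_comm]
        exact hz b' ⟨ε', hs', hg⟩
      have hbu : b' ⬝ᵥ u = b' ⬝ᵥ y := by
        rw [hu, dotProduct_add, hbz, add_zero]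
      rw [hbu, hε', dotProduct_comm y b', sgnC_sq]
    · left
      have hne : u + a' ≠ u := by
        intro hcontra
        apply ha'
        have : u + a' = u + 0 := by rw [add_zero]; exact hcontra
        exact add_left_cancel this
      have hδ0 : δ (u + a') = 0 := by rw [hδ]; simp [hne]
      rw [hδ0, mul_zero, mul_zero]
  have h1mem : (1 : Matrix (Fin n → ZMod 2) (Fin n → ZMod 2) ℂ) ∈ Sfin.filter
      (fun g => g.mulVec δ u = 1) := by
    rw [Finset.mem_filter, hmemS]
    refine ⟨hone, ?_⟩
    rw [Matrix.one_mulVec, hδ]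
    simp
  have hψu : ψ u = ((Sfin.filter (fun g => g.mulVec δ u = 1)).card : ℂ) := by
    show ∑ g ∈ Sfin, (g.mulVec δ) u = ((Sfin.filter (fun g => g.mulVec δ u = 1)).card : ℂ)
    rw [← Finset.sum_filter_add_sum_filter_not Sfin (fun g => g.mulVec δ u = 1)]
    have e1 : ∑ g ∈ Sfin.filter (fun g => g.mulVec δ u = 1), g.mulVec δ u
        = ((Sfin.filter (fun g => g.mulVec δ u = 1)).card : ℂ) := by
      rw [Finset.sum_congr rfl (fun g hg => (Finset.mem_filter.mp hg).2), Finset.sum_const,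
        nsmul_eq_mul, mul_one]
    have e2 : ∑ g ∈ Sfin.filter (fun g => ¬ g.mulVec δ u = 1), g.mulVec δ u = 0 := by
      refine Finset.sum_eq_zero fun g hg => ?_
      have hg' := Finset.mem_filter.mp hg
      rcases hval g ((hmemS g).mp hg'.1) with h|h
      · exact h
      · exact absurd h hg'.2
    rw [e1, e2, add_zero]
  have hψne : ψ u ≠ 0 := by
    rw [hψu]
    exact_mod_cast Nat.cast_ne_zero.mpr (Finset.card_ne_zero_of_mem h1mem)
  -- main equation
  set l : ℕ := n + 2 with hl
  set θ : ℝ := Real.pi / 2 ^ l with hθ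
  have hTψ := hlhs l (by rw [hl]; omega) ψ hstab (ε • PauliE n a b) hmem
  have h1 := congrFun hTψ u
  rw [Matrix.smul_mulVec, Pi.smul_apply, pauliE_mulVec, smul_eq_mul,
    rot_mulVec, rot_mulVec] at h1
  have hgψ := congrFun (hstab _ hmem) u
  rw [Matrix.smul_mulVec, Pi.smul_apply, pauliE_mulVec, smul_eq_mul] at hgψ
  have h2 : Complex.exp (Complex.I * θ * ((totSum (u+a) : ℤ) : ℂ)) * ψ u
      = Complex.exp (Complex.I * θ * ((totSum u : ℤ) : ℂ)) * ψ u := by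
    linear_combination h1 - Complex.exp (Complex.I * θ * ((totSum (u+a) : ℤ) : ℂ)) * hgψ
  have h3 := mul_right_cancel₀ hψne h2
  have h4 : totSum (u + a) = totSum u := by
    refine exp_tot_eq l (by rw [hl]) _ _ h3 ⟨- sgnSum a u, ?_, ?_⟩
    · rw [totSum_add]; ring
    · rw [abs_neg]; exact sgnSum_abs_le a u
  have h5 := totSum_add u a
  rw [h4] at h5
  omega

end Obl5

namespace Obl6
open Obl Obl2 Obl3 Obl4 Obl5

variable {n : ℕ} {S : Set (Matrix (Fin n → ZMod 2) (Fin n → ZMod 2) ℂ)}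
variable {G : SimpleGraph (Fin n)}

lemma count_sum (y : Fin n → ZMod 2) (C : Finset (Fin n)) :
    ∑ k ∈ C, ((-1:ℤ))^((y k).val)
      = (C.card : ℤ) - 2 * ((C.filter (fun k => y k ≠ 0)).card : ℤ) := by
  classical
  rw [← Finset.sum_filter_add_sum_filter_not C (fun k => y k ≠ 0)]
  have e1 : ∑ k ∈ C.filter (fun k => y k ≠ 0), ((-1:ℤ))^((y k).val)
      = -((C.filter (fun k => y k ≠ 0)).card : ℤ) := by
    have h1 : ∀ k ∈ C.filter (fun k => y k ≠ 0), ((-1:ℤ))^((y k).val) = -1 := by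
      intro k hk
      rcases zmod2_cases (y k) with h|h
      · exact absurd h (Finset.mem_filter.mp hk).2
      · rw [h]; norm_num [ZMod.val_one]
    rw [Finset.sum_congr rfl h1, Finset.sum_const, nsmul_eq_mul, mul_neg_one]
  have e2 : ∑ k ∈ C.filter (fun k => ¬ y k ≠ 0), ((-1:ℤ))^((y k).val)
      = ((C.filter (fun k => ¬ y k ≠ 0)).card : ℤ) := by
    have h1 : ∀ k ∈ C.filter (fun k => ¬ y k ≠ 0), ((-1:ℤ))^((y k).val) = 1 := by
      intro k hk
      have h := not_not.mp (Finset.mem_filter.mp hk).2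
      rw [h]; norm_num
    rw [Finset.sum_congr rfl h1, Finset.sum_const, nsmul_eq_mul, mul_one]
  rw [e1, e2]
  have := Finset.card_filter_add_card_filter_not (s := C) (p := fun k => y k ≠ 0)
  push_cast at this ⊢
  linarith

lemma comp_balanced
    (hone : (1 : Matrix (Fin n → ZMod 2) (Fin n → ZMod 2) ℂ) ∈ S)
    (hmul : ∀ g ∈ S, ∀ h ∈ S, g * h ∈ S)
    (hG : ∀ i j, G.Adj i j ↔ i ≠ j ∧ i ∈ GammaSet n S ∧ j ∈ GammaSet n S ∧
      ∃ ε : ℂ, (ε = 1 ∨ ε = -1) ∧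
        ε • PauliE n 0 (Pi.single i 1 + Pi.single j 1) ∈ S)
    (y : Fin n → ZMod 2)
    {ε : ℂ} {a b : Fin n → ZMod 2} (hs : ε = 1 ∨ ε = -1) (hmem : ε • PauliE n a b ∈ S)
    (hkey : ∀ z : Fin n → ZMod 2, (∀ v, Zmem n S v → z ⬝ᵥ v = 0) → sgnSum a (y + z) = 0)
    {i : Fin n} (hC : ∀ j, G.Reachable i j → a j ≠ 0) :
    ∑ k ∈ (Set.toFinite {k | G.Reachable i k}).toFinset, ((-1:ℤ))^((y k).val) = 0 := by
  classical
  have hai : a i ≠ 0 := hC i (SimpleGraph.Reachable.refl i)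
  set Zp : Set (Fin n → ZMod 2) := {z | ∀ v, Zmem n S v → z ⬝ᵥ v = 0} with hZp
  have hZpfin : Zp.Finite := Set.toFinite _
  set H : Finset (Fin n → ZMod 2) := hZpfin.toFinset with hH
  have hHmem : ∀ z, z ∈ H ↔ ∀ v, Zmem n S v → z ⬝ᵥ v = 0 := by
    intro z; rw [hH, Set.Finite.mem_toFinset]; rfl
  have h0H : (0 : Fin n → ZMod 2) ∈ H :=
    (hHmem 0).mpr (fun v _ => zero_dotProduct v)
  have htot : ∑ z ∈ H, ((-1:ℤ))^((z i).val) * sgnSum a (y + z) = 0 :=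
    Finset.sum_eq_zero fun z hzH => by rw [hkey z ((hHmem z).mp hzH), mul_zero]
  have hswap : ∑ z ∈ H, ((-1:ℤ))^((z i).val) * sgnSum a (y + z)
      = ∑ k ∈ suppF a, ((-1:ℤ))^((y k).val) *
          (∑ z ∈ H, ((-1:ℤ))^((z ⬝ᵥ (Pi.single i 1 + Pi.single k 1)).val)) := by
    calc ∑ z ∈ H, ((-1:ℤ))^((z i).val) * sgnSum a (y + z)
        = ∑ z ∈ H, ∑ k ∈ suppF a, ((-1:ℤ))^((z i).val) * ((-1:ℤ))^(((y + z) k).val) := by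
          refine Finset.sum_congr rfl fun z _ => ?_
          unfold sgnSum
          rw [Finset.mul_sum]
      _ = ∑ k ∈ suppF a, ∑ z ∈ H, ((-1:ℤ))^((z i).val) * ((-1:ℤ))^(((y + z) k).val) :=
          Finset.sum_comm
      _ = ∑ k ∈ suppF a, ((-1:ℤ))^((y k).val) *
            (∑ z ∈ H, ((-1:ℤ))^((z ⬝ᵥ (Pi.single i 1 + Pi.single k 1)).val)) := by
          refine Finset.sum_congr rfl fun k _ => ?_
          rw [Finset.mul_sum]
          refine Finset.sum_congr rfl fun z _ => ?_
          rw [dot_pair]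
          show ((-1:ℤ))^((z i).val) * ((-1:ℤ))^((y k + z k).val) = _
          rw [sgnZ_add, sgnZ_add]
          ring
  have hinner : ∀ k, ¬ Zmem n S (Pi.single i 1 + Pi.single k 1) →
      (∑ z ∈ H, ((-1:ℤ))^((z ⬝ᵥ (Pi.single i 1 + Pi.single k 1)).val)) = 0 := by
    intro k hnz
    set w : Fin n → ZMod 2 := Pi.single i 1 + Pi.single k 1 with hw
    obtain ⟨z₀, hz₀perp, hz₀w⟩ := exists_perp {v | Zmem n S v} (Zmem_zero hone)
      (fun v hv w' hw' => Zmem_add hmul hv hw') w hnz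
    have hmap : ∀ z ∈ H, z + z₀ ∈ H := by
      intro z hzH
      rw [hHmem] at hzH ⊢
      intro v hv
      rw [add_dotProduct, hzH v hv, hz₀perp v hv, add_zero]
    have hneg : ∑ z ∈ H, -((-1:ℤ))^((z ⬝ᵥ w).val) = ∑ z ∈ H, ((-1:ℤ))^((z ⬝ᵥ w).val) := by
      refine Finset.sum_nbij' (fun z => z + z₀) (fun z => z + z₀) hmap hmap
        (fun z _ => add_add_self z z₀) (fun z _ => add_add_self z z₀) ?_
      intro z _
      rw [add_dotProduct, sgnZ_add, hz₀w]
      norm_num [ZMod.val_one]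
    rw [Finset.sum_neg_distrib] at hneg
    linarith
  have hinner2 : ∀ k, Zmem n S (Pi.single i 1 + Pi.single k 1) →
      (∑ z ∈ H, ((-1:ℤ))^((z ⬝ᵥ (Pi.single i 1 + Pi.single k 1)).val)) = (H.card : ℤ) := by
    intro k hzmem
    have h1 : ∀ z ∈ H, ((-1:ℤ))^((z ⬝ᵥ (Pi.single i 1 + Pi.single k 1)).val) = 1 := by
      intro z hzH
      rw [(hHmem z).mp hzH _ hzmem]
      norm_num
    rw [Finset.sum_congr rfl h1, Finset.sum_const, nsmul_eq_mul, mul_one]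
  -- identify the reachable class
  have hclass : (suppF a).filter (fun k => Zmem n S (Pi.single i 1 + Pi.single k 1))
      = (Set.toFinite {k | G.Reachable i k}).toFinset := by
    ext k
    simp only [Finset.mem_filter, Set.Finite.mem_toFinset, Set.mem_setOf_eq]
    constructor
    · rintro ⟨hk, hzm⟩
      rw [suppF, Finset.mem_filter] at hk
      by_cases hik : i = k
      · subst hik; exact SimpleGraph.Reachable.refl i
      · exact (Zmem_adj hG hik hs hmem hai hk.2 hzm).reachable
    · intro hr
      constructor
      · rw [suppF, Finset.mem_filter]
        exact ⟨Finset.mem_univ _, hC k hr⟩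
      · exact reach_Zmem hG hone hmul hr
  -- combine
  have hcomb : ∑ k ∈ suppF a, ((-1:ℤ))^((y k).val) *
        (∑ z ∈ H, ((-1:ℤ))^((z ⬝ᵥ (Pi.single i 1 + Pi.single k 1)).val))
      = (H.card : ℤ) * ∑ k ∈ (Set.toFinite {k | G.Reachable i k}).toFinset,
          ((-1:ℤ))^((y k).val) := by
    rw [← hclass, Finset.mul_sum, ← Finset.sum_filter_add_sum_filter_not (suppF a)
      (fun k => Zmem n S (Pi.single i 1 + Pi.single k 1))]
    have e2 : ∑ k ∈ (suppF a).filter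
          (fun k => ¬ Zmem n S (Pi.single i 1 + Pi.single k 1)),
        ((-1:ℤ))^((y k).val) *
          (∑ z ∈ H, ((-1:ℤ))^((z ⬝ᵥ (Pi.single i 1 + Pi.single k 1)).val)) = 0 := by
      refine Finset.sum_eq_zero fun k hk => ?_
      rw [hinner k (Finset.mem_filter.mp hk).2, mul_zero]
    have e1 : ∑ k ∈ (suppF a).filter
          (fun k => Zmem n S (Pi.single i 1 + Pi.single k 1)),
        ((-1:ℤ))^((y k).val) *
          (∑ z ∈ H, ((-1:ℤ))^((z ⬝ᵥ (Pi.single i 1 + Pi.single k 1)).val))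
        = ∑ k ∈ (suppF a).filter
          (fun k => Zmem n S (Pi.single i 1 + Pi.single k 1)),
          (H.card : ℤ) * ((-1:ℤ))^((y k).val) := by
      refine Finset.sum_congr rfl fun k hk => ?_
      rw [hinner2 k (Finset.mem_filter.mp hk).2]
      ring
    rw [e1, e2, add_zero]
  rw [hswap, hcomb] at htot
  have hcard : (0:ℤ) < (H.card : ℤ) := by
    exact_mod_cast Finset.card_pos.mpr ⟨0, h0H⟩
  rcases mul_eq_zero.mp htot with h|h
  · linarith
  · exact h

end Obl6

namespace Obl7
open Obl Obl2 Obl3 Obl4 Obl5 Obl6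

variable {n : ℕ} {S : Set (Matrix (Fin n → ZMod 2) (Fin n → ZMod 2) ℂ)}
variable {G : SimpleGraph (Fin n)}

lemma sgnSum_of_zero (u : Fin n → ZMod 2) : sgnSum (0 : Fin n → ZMod 2) u = 0 := by
  unfold sgnSum suppF
  have : Finset.univ.filter (fun i => (0 : Fin n → ZMod 2) i ≠ 0) = ∅ := by
    ext i; simp
  rw [this, Finset.sum_empty]

lemma key_of_rhs
    (hG : ∀ i j, G.Adj i j ↔ i ≠ j ∧ i ∈ GammaSet n S ∧ j ∈ GammaSet n S ∧
      ∃ ε : ℂ, (ε = 1 ∨ ε = -1) ∧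
        ε • PauliE n 0 (Pi.single i 1 + Pi.single j 1) ∈ S)
    (y : Fin n → ZMod 2)
    {a : Fin n → ZMod 2}
    (hbal : ∀ i, (∀ j, G.Reachable i j → a j ≠ 0) →
        ∑ k ∈ (Set.toFinite {k | G.Reachable i k}).toFinset, ((-1:ℤ))^((y k).val) = 0)
    (hclosed : ∀ i j, a i ≠ 0 → G.Reachable i j → a j ≠ 0)
    {z : Fin n → ZMod 2} (hz : ∀ v, Zmem n S v → z ⬝ᵥ v = 0) :
    sgnSum a (y + z) = 0 := by
  classical
  unfold sgnSum
  rw [← Finset.sum_fiberwise_of_maps_to (g := fun k => G.connectedComponentMk k)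
    (t := (suppF a).image (fun k => G.connectedComponentMk k))
    (fun x hx => Finset.mem_image_of_mem _ hx)]
  refine Finset.sum_eq_zero fun c hc => ?_
  obtain ⟨i₀, hi₀supp, hi₀c⟩ := Finset.mem_image.mp hc
  have hai₀ : a i₀ ≠ 0 := by
    rw [suppF, Finset.mem_filter] at hi₀supp
    exact hi₀supp.2
  have hCsub : ∀ j, G.Reachable i₀ j → a j ≠ 0 := fun j hr => hclosed i₀ j hai₀ hr
  have hfib : (suppF a).filter (fun k => G.connectedComponentMk k = c)
      = (Set.toFinite {k | G.Reachable i₀ k}).toFinset := by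
    ext k
    simp only [Finset.mem_filter, Set.Finite.mem_toFinset, Set.mem_setOf_eq]
    constructor
    · rintro ⟨hk, hkc⟩
      rw [← hi₀c] at hkc
      exact (SimpleGraph.ConnectedComponent.eq.mp hkc).symm
    · intro hr
      refine ⟨?_, ?_⟩
      · rw [suppF, Finset.mem_filter]
        exact ⟨Finset.mem_univ _, hCsub k hr⟩
      · rw [← hi₀c]
        exact SimpleGraph.ConnectedComponent.eq.mpr hr.symm
  rw [hfib]
  have hzconst : ∀ k ∈ (Set.toFinite {k | G.Reachable i₀ k}).toFinset, z k = z i₀ := by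
    intro k hk
    rw [Set.Finite.mem_toFinset, Set.mem_setOf_eq] at hk
    exact (eq_on_reach hG hz hk).symm
  have hterm : ∀ k ∈ (Set.toFinite {k | G.Reachable i₀ k}).toFinset,
      ((-1:ℤ))^(((y + z) k).val) = ((-1:ℤ))^((z i₀).val) * ((-1:ℤ))^((y k).val) := by
    intro k hk
    show ((-1:ℤ))^((y k + z k).val) = _
    rw [sgnZ_add, hzconst k hk]
    ring
  rw [Finset.sum_congr rfl hterm, ← Finset.mul_sum, hbal i₀ hCsub, mul_zero]

end Obl7


open Obl Obl2 Obl3 Obl4 Obl5 Obl6 Obl7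

/-- Theorem 8 of the paper. Let `S` be a stabilizer group on `n` qubits
(a commutative set of signed Hermitian Paulis `±E(a,b)`, closed under multiplication,
containing `I` and not `−I`), let `Γ` and the graph `G` on `Γ` (joining `i, j ∈ Γ` iff some
`ε′E(0, e_i + e_j) ∈ S`) be as above, and let `y ∈ F₂ⁿ` record the signs of the pure-`Z`
elements of `S` (`ε_v = (−1)^{y·v}`). Then the transversal `π/2^l` Z-rotation preserves the
code space `V(S)` for every `l ≥ 2` if and only if for every `±E(a,b) ∈ S` with `a ≠ 0`:
(1) `supp(a)` is the disjoint union of the connected components `Γ_k ⊆ supp(a)` (every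
component meeting `supp(a)` lies in it); and (2) for every component `Γ_k ⊆ supp(a)`, its
size `N_k` is even and `w_H(y|_{Γ_k}) = N_k/2`. -/
theorem oblivious_iff_balanced_weight_two (n : ℕ) (hn : 1 ≤ n)
    (S : Set (Matrix (Fin n → ZMod 2) (Fin n → ZMod 2) ℂ))
    (hform : ∀ g ∈ S, ∃ (ε : ℂ) (a b : Fin n → ZMod 2),
      (ε = 1 ∨ ε = -1) ∧ g = ε • PauliE n a b)
    (hone : (1 : Matrix (Fin n → ZMod 2) (Fin n → ZMod 2) ℂ) ∈ S)
    (hmul : ∀ g ∈ S, ∀ h ∈ S, g * h ∈ S)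
    (hcomm : ∀ g ∈ S, ∀ h ∈ S, g * h = h * g)
    (hneg : (-1 : Matrix (Fin n → ZMod 2) (Fin n → ZMod 2) ℂ) ∉ S)
    (y : Fin n → ZMod 2)
    (hy : ∀ (ε : ℂ) (v : Fin n → ZMod 2), (ε = 1 ∨ ε = -1) →
      ε • PauliE n 0 v ∈ S → ε = (-1 : ℂ) ^ (y ⬝ᵥ v).val)
    (G : SimpleGraph (Fin n))
    (hG : ∀ i j, G.Adj i j ↔ i ≠ j ∧ i ∈ GammaSet n S ∧ j ∈ GammaSet n S ∧
      ∃ ε : ℂ, (ε = 1 ∨ ε = -1) ∧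
        ε • PauliE n 0 (Pi.single i 1 + Pi.single j 1) ∈ S) :
    (∀ l : ℕ, 2 ≤ l → ∀ ψ : (Fin n → ZMod 2) → ℂ,
      (∀ g ∈ S, g.mulVec ψ = ψ) →
      ∀ g ∈ S, g.mulVec ((transversalZRot n (Real.pi / 2 ^ l)).mulVec ψ)
        = (transversalZRot n (Real.pi / 2 ^ l)).mulVec ψ)
    ↔ (∀ (ε : ℂ) (a b : Fin n → ZMod 2), (ε = 1 ∨ ε = -1) →
        ε • PauliE n a b ∈ S → a ≠ 0 →
        (∀ i j, a i ≠ 0 → G.Reachable i j → a j ≠ 0) ∧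
        (∀ i, (∀ j, G.Reachable i j → a j ≠ 0) →
          Even ({j | G.Reachable i j}.ncard) ∧
          2 * ({j | G.Reachable i j ∧ y j ≠ 0}.ncard) = {j | G.Reachable i j}.ncard)) := by
  classical
  constructor
  · intro hlhs ε a b hs hmem ha0
    have hza : ∀ v, Zmem n S v → a ⬝ᵥ v = 0 := fun v hv => by
      rw [dotProduct_comm]; exact dot_zero hcomm hs hmem hv
    have hclosed : ∀ i j, a i ≠ 0 → G.Reachable i j → a j ≠ 0 := fun i j hai hr => by
      rw [← eq_on_reach hG hza hr]; exact hai
    refine ⟨hclosed, fun i hC => ?_⟩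
    have hkey : ∀ z : Fin n → ZMod 2, (∀ v, Zmem n S v → z ⬝ᵥ v = 0) →
        sgnSum a (y + z) = 0 := fun z hz =>
      key_of_lhs hform hone hmul y hy hlhs hs hmem hz
    have hsum := comp_balanced hone hmul hG y hs hmem hkey hC
    rw [count_sum] at hsum
    set C := (Set.toFinite {k | G.Reachable i k}).toFinset with hc
    have hc1 : {j | G.Reachable i j}.ncard = C.card :=
      Set.ncard_eq_toFinset_card _ _
    have hc2 : {j | G.Reachable i j ∧ y j ≠ 0}.ncard
        = (C.filter (fun k => y k ≠ 0)).card := by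
      have hset : {j | G.Reachable i j ∧ y j ≠ 0} = ↑(C.filter (fun k => y k ≠ 0)) := by
        ext j
        simp [hc, Set.Finite.mem_toFinset]
      rw [hset, Set.ncard_coe_finset]
    have hnat : C.card = 2 * (C.filter (fun k => y k ≠ 0)).card := by
      have hcc : (C.card : ℤ) = 2 * ((C.filter (fun k => y k ≠ 0)).card : ℤ) := by
        linarith
      exact_mod_cast hcc
    constructor
    · rw [hc1]
      exact ⟨(C.filter (fun k => y k ≠ 0)).card, by omega⟩
    · rw [hc1, hc2]
      omega
  · intro hrhs l hl ψ hstab g hg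
    obtain ⟨ε, a, b, hs, rfl⟩ := hform g hg
    have hkey : ∀ z : Fin n → ZMod 2, (∀ v, Zmem n S v → z ⬝ᵥ v = 0) →
        sgnSum a (y + z) = 0 := by
      intro z hz
      by_cases ha0 : a = 0
      · subst ha0; exact sgnSum_of_zero _
      · obtain ⟨hclosed, hcomp⟩ := hrhs ε a b hs hg ha0
        refine key_of_rhs hG y ?_ hclosed hz
        intro i hC
        obtain ⟨heven, hhalf⟩ := hcomp i hC
        rw [count_sum]
        set C := (Set.toFinite {k | G.Reachable i k}).toFinset with hc
        have hc1 : {j | G.Reachable i j}.ncard = C.card :=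
          Set.ncard_eq_toFinset_card _ _
        have hc2 : {j | G.Reachable i j ∧ y j ≠ 0}.ncard
            = (C.filter (fun k => y k ≠ 0)).card := by
          have hset : {j | G.Reachable i j ∧ y j ≠ 0} = ↑(C.filter (fun k => y k ≠ 0)) := by
            ext j
            simp [hc, Set.Finite.mem_toFinset]
          rw [hset, Set.ncard_coe_finset]
        rw [hc1, hc2] at hhalf
        have : (C.card : ℤ) = 2 * ((C.filter (fun k => y k ≠ 0)).card : ℤ) := by
          exact_mod_cast hhalf.symm
        linarith
    funext u
    have hgψ := congrFun (hstab _ hg) u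
    rw [Matrix.smul_mulVec, Pi.smul_apply, pauliE_mulVec, smul_eq_mul] at hgψ
    show ((ε • PauliE n a b).mulVec ((transversalZRot n (Real.pi / 2 ^ l)).mulVec ψ)) u
        = ((transversalZRot n (Real.pi / 2 ^ l)).mulVec ψ) u
    rw [Matrix.smul_mulVec, Pi.smul_apply, pauliE_mulVec, smul_eq_mul,
      rot_mulVec, rot_mulVec]
    by_cases h0 : ψ (u + a) = 0
    · have hψu : ψ u = 0 := by rw [← hgψ, h0]; ring
      rw [h0, hψu]
      ring
    · have hψune : ψ u ≠ 0 := by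
        rw [← hgψ]
        refine mul_ne_zero (sign_ne_zero hs) (mul_ne_zero (mul_ne_zero
          (I_pow_ne_zero _) (pow_ne_zero _ (by norm_num))) h0)
      have hzperp : ∀ v, Zmem n S v → (u + y) ⬝ᵥ v = 0 := by
        intro v hv
        obtain ⟨ε', hs', hm'⟩ := hv
        have hst := congrFun (hstab _ hm') u
        rw [Matrix.smul_mulVec, Pi.smul_apply, pauliE_mulVec, smul_eq_mul] at hst
        simp only [Pi.zero_apply, ZMod.val_zero, Nat.zero_mul, Finset.sum_const_zero,
          pow_zero, one_mul, add_zero] at hst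
        -- hst : ε' * ((-1)^((v ⬝ᵥ u).val) * ψ u) = ψ u
        have hcancel : ε' * (-1:ℂ)^((v ⬝ᵥ u).val) = 1 := by
          have h1 : (ε' * (-1:ℂ)^((v ⬝ᵥ u).val)) * ψ u = 1 * ψ u := by
            linear_combination hst
          exact mul_right_cancel₀ hψune h1
        have hε' := hy ε' v hs' hm'
        rw [hε'] at hcancel
        rw [add_dotProduct]
        have hcomm' : u ⬝ᵥ v = v ⬝ᵥ u := dotProduct_comm _ _
        rcases zmod2_cases (y ⬝ᵥ v) with hyv|hyv <;>
          rcases zmod2_cases (v ⬝ᵥ u) with hvu|hvu <;>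
          rw [hyv, hvu] at hcancel <;>
          simp only [ZMod.val_zero, ZMod.val_one, pow_zero, pow_one, mul_one, one_mul] at hcancel
        · rw [hcomm', hvu, hyv]; rfl
        · norm_num at hcancel
        · norm_num at hcancel
        · rw [hcomm', hvu, hyv]; rfl
      have hsgn : sgnSum a u = 0 := by
        have hk := hkey (u + y) hzperp
        have hyu : y + (u + y) = u := by
          funext x
          have h4 : ∀ p q : ZMod 2, p + (q + p) = q := by decide
          exact h4 _ _
        rwa [hyu] at hk
      have htoteq : totSum (u + a) = totSum u := by
        rw [totSum_add, hsgn]; ring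
      rw [htoteq]
      linear_combination Complex.exp (Complex.I * ((Real.pi / 2 ^ l : ℝ)) *
        ((totSum u : ℤ) : ℂ)) * hgψ
end

section
/- Let m ≥ 1, let y ∈ F₂^m, let B ⊆ F₂^m be a binary linear code all of whose codewords have even Hamming weight, and set ε_v = (−1)^{y·v} for v ∈ B. Let G be the simple graph on {1,…,m} in which distinct i and j are adjacent if and only if e_i + e_j ∈ B. Suppose that for every integer l ≥ 3, Σ_{v∈B} ε_v (i tan(2π/2^l))^{w_H(v)} = (sec(2π/2^l))^m. Then G has no isolated vertices, so {1,…,m} is partitioned by the connected components Γ₁,…,Γ_t of G; moreover each N_k = |Γ_k| is even and w_H(y|_{Γ_k}) = N_k/2 for every k. -/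
open Matrix Finset

lemma zmod2_cases (a : ZMod 2) : a = 0 ∨ a = 1 := by
  revert a; decide

lemma val_zero' : (0 : ZMod 2).val = 0 := by decide
lemma val_one' : (1 : ZMod 2).val = 1 := by decide
lemma two_eq_zero' : (1 + 1 : ZMod 2) = 0 := by decide

noncomputable def chi (a : ZMod 2) : ℂ := (-1 : ℂ) ^ a.val

lemma chi_add (a b : ZMod 2) : chi (a + b) = chi a * chi b := by
  rcases zmod2_cases a with h | h <;> rcases zmod2_cases b with h' | h' <;>
    subst h <;> subst h' <;>
    simp [chi, two_eq_zero', val_zero', val_one']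

lemma chi_zero : chi 0 = 1 := by simp [chi, val_zero']

lemma chi_one : chi 1 = -1 := by simp [chi, val_one']

lemma sum_zmod2 (f : ZMod 2 → ℂ) : ∑ b : ZMod 2, f b = f 0 + f 1 := by
  exact Fin.sum_univ_two f

lemma hammingNorm_eq_sum {m : ℕ} (u : Fin m → ZMod 2) :
    hammingNorm u = ∑ j, (u j).val := by
  rw [hammingNorm, Finset.card_filter]
  refine Finset.sum_congr rfl fun j _ => ?_
  rcases zmod2_cases (u j) with h | h <;> simp [h, val_one']

lemma chi_sum {ι : Type*} (s : Finset ι) (f : ι → ZMod 2) :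
    chi (∑ j ∈ s, f j) = ∏ j ∈ s, chi (f j) := by
  classical
  induction s using Finset.induction_on with
  | empty => simp [chi_zero]
  | @insert a s' h ih => simp [Finset.sum_insert h, Finset.prod_insert h, chi_add, ih]

lemma factor_sum (v : ZMod 2) (q : ℂ) :
    1 + chi v * q = ∑ b : ZMod 2, chi (b * v) * q ^ b.val := by
  rw [sum_zmod2]
  simp [chi_zero, val_zero', val_one']

lemma prod_factor {m : ℕ} (v : Fin m → ZMod 2) (q : ℂ) :
    ∏ j, (1 + chi (v j) * q)
      = (q + 1) ^ (m - hammingNorm v) * (1 - q) ^ hammingNorm v := by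
  classical
  rw [← Finset.prod_filter_mul_prod_filter_not Finset.univ (fun j => v j ≠ 0)]
  have h1 : ∀ j ∈ Finset.univ.filter (fun j => v j ≠ 0), 1 + chi (v j) * q = 1 - q := by
    intro j hj
    rcases zmod2_cases (v j) with h | h
    · simp [h] at hj
    · rw [h, chi_one]; ring
  have h2 : ∀ j ∈ Finset.univ.filter (fun j => ¬ v j ≠ 0), 1 + chi (v j) * q = q + 1 := by
    intro j hj
    simp only [Finset.mem_filter, not_not] at hj
    rw [hj.2, chi_zero]; ring
  rw [Finset.prod_congr rfl h1, Finset.prod_congr rfl h2, Finset.prod_const, Finset.prod_const]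
  have hcard : (Finset.univ.filter (fun j => v j ≠ 0)).card = hammingNorm v := rfl
  have hcard2 : (Finset.univ.filter (fun j => ¬ v j ≠ 0)).card = m - hammingNorm v := by
    have := Finset.card_filter_add_card_filter_not (s := (Finset.univ : Finset (Fin m)))
      (p := fun j => v j ≠ 0)
    simp only [Finset.card_univ, Fintype.card_fin] at this
    omega
  rw [hcard, hcard2, mul_comm]

lemma expand_term {m : ℕ} (v : Fin m → ZMod 2) (q : ℂ) :
    (q + 1) ^ (m - hammingNorm v) * (1 - q) ^ hammingNorm v
      = ∑ u : Fin m → ZMod 2, chi (u ⬝ᵥ v) * q ^ hammingNorm u := by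
  classical
  rw [← prod_factor]
  have : ∀ j : Fin m, (1 + chi (v j) * q) = ∑ b : ZMod 2, chi (b * v j) * q ^ b.val :=
    fun j => factor_sum (v j) q
  rw [Finset.prod_congr rfl (fun j _ => this j), Finset.prod_univ_sum,
    Fintype.piFinset_univ]
  refine Finset.sum_congr rfl fun g _ => ?_
  rw [Finset.prod_mul_distrib, ← chi_sum, Finset.prod_pow_eq_pow_sum,
    ← hammingNorm_eq_sum]
  rfl

section Code
open scoped Classical

variable {m : ℕ} (B : Submodule (ZMod 2) (Fin m → ZMod 2))

lemma orth_zero {x : Fin m → ZMod 2} (h : ∀ v ∈ B, x ⬝ᵥ v = 0) :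
    ∑ v ∈ Finset.univ.filter (fun v : Fin m → ZMod 2 => v ∈ B), chi (x ⬝ᵥ v)
      = (Finset.univ.filter (fun v : Fin m → ZMod 2 => v ∈ B)).card := by
  rw [Finset.sum_congr rfl (fun v hv => ?_), Finset.sum_const, nsmul_eq_mul, mul_one]
  rw [h v (Finset.mem_filter.mp hv).2, chi_zero]

lemma orth_ne {x : Fin m → ZMod 2} {v₀ : Fin m → ZMod 2} (hv₀ : v₀ ∈ B)
    (h : x ⬝ᵥ v₀ ≠ 0) :
    ∑ v ∈ Finset.univ.filter (fun v : Fin m → ZMod 2 => v ∈ B), chi (x ⬝ᵥ v) = 0 := by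
  have h1 : x ⬝ᵥ v₀ = 1 := (zmod2_cases _).resolve_left h
  set S := Finset.univ.filter (fun v : Fin m → ZMod 2 => v ∈ B) with hS
  have key : ∑ v ∈ S, chi (x ⬝ᵥ (v + v₀)) = ∑ v ∈ S, chi (x ⬝ᵥ v) := by
    refine Finset.sum_equiv (Equiv.addRight v₀) (fun v => ?_) (fun v hv => rfl)
    simp only [hS, Finset.mem_filter, Finset.mem_univ, true_and, Equiv.coe_addRight]
    constructor
    · intro hv; exact B.add_mem hv hv₀
    · intro hv
      have : v = v + v₀ - v₀ := by ring
      rw [this]; exact B.sub_mem hv hv₀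
  have key2 : ∀ v ∈ S, chi (x ⬝ᵥ (v + v₀)) = - chi (x ⬝ᵥ v) := by
    intro v hv
    rw [dotProduct_add, chi_add, h1, chi_one]; ring
  rw [Finset.sum_congr rfl key2, Finset.sum_neg_distrib] at key
  have h2 : (2 : ℂ) * ∑ v ∈ S, chi (x ⬝ᵥ v) = 0 := by linear_combination - key
  rcases mul_eq_zero.mp h2 with h3 | h3
  · norm_num at h3
  · exact h3

end Code

section Glue
open scoped Classical

variable {m : ℕ}

lemma lemmaA (B : Submodule (ZMod 2) (Fin m → ZMod 2)) (y : Fin m → ZMod 2) (q : ℂ) :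
    ∑ v ∈ Finset.univ.filter (fun v : Fin m → ZMod 2 => v ∈ B),
        chi (y ⬝ᵥ v) * ((q + 1) ^ (m - hammingNorm v) * (1 - q) ^ hammingNorm v)
      = ((Finset.univ.filter (fun v : Fin m → ZMod 2 => v ∈ B)).card : ℂ) *
        ∑ u ∈ Finset.univ.filter
            (fun u : Fin m → ZMod 2 => ∀ v ∈ B, (u + y) ⬝ᵥ v = 0),
          q ^ hammingNorm u := by
  set S := Finset.univ.filter (fun v : Fin m → ZMod 2 => v ∈ B) with hS
  have step1 : ∀ v ∈ S,
      chi (y ⬝ᵥ v) * ((q + 1) ^ (m - hammingNorm v) * (1 - q) ^ hammingNorm v)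
        = ∑ u : Fin m → ZMod 2, chi ((u + y) ⬝ᵥ v) * q ^ hammingNorm u := by
    intro v hv
    rw [expand_term, Finset.mul_sum]
    refine Finset.sum_congr rfl fun u _ => ?_
    rw [add_dotProduct, chi_add]
    ring
  rw [Finset.sum_congr rfl step1, Finset.sum_comm]
  have step2 : ∀ u : Fin m → ZMod 2,
      ∑ v ∈ S, chi ((u + y) ⬝ᵥ v) * q ^ hammingNorm u
        = (∑ v ∈ S, chi ((u + y) ⬝ᵥ v)) * q ^ hammingNorm u := by
    intro u; rw [Finset.sum_mul]
  rw [Finset.sum_congr rfl (fun u _ => step2 u)]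
  rw [← Finset.sum_filter_add_sum_filter_not Finset.univ
    (fun u : Fin m → ZMod 2 => ∀ v ∈ B, (u + y) ⬝ᵥ v = 0)]
  have hz : ∑ u ∈ Finset.univ.filter
      (fun u : Fin m → ZMod 2 => ¬ ∀ v ∈ B, (u + y) ⬝ᵥ v = 0),
      (∑ v ∈ S, chi ((u + y) ⬝ᵥ v)) * q ^ hammingNorm u = 0 := by
    refine Finset.sum_eq_zero fun u hu => ?_
    simp only [Finset.mem_filter, not_forall] at hu
    obtain ⟨v₀, hv₀, hne⟩ := hu.2
    rw [orth_ne B hv₀ hne]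
    ring
  rw [hz, add_zero, Finset.mul_sum]
  refine Finset.sum_congr rfl fun u hu => ?_
  rw [orth_zero B (Finset.mem_filter.mp hu).2]

end Glue

section Analytic
open scoped Classical
open Complex

lemma hammingNorm_le {m : ℕ} (v : Fin m → ZMod 2) : hammingNorm v ≤ m := by
  calc hammingNorm v ≤ (Finset.univ : Finset (Fin m)).card := Finset.card_filter_le _ _
  _ = m := by simp

lemma lemmaC (m l : ℕ) (hl : 3 ≤ l) (y : Fin m → ZMod 2)
    (B : Submodule (ZMod 2) (Fin m → ZMod 2))
    (hev : ∀ v ∈ B, Even (hammingNorm v))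
    (hsum_l : ∑ v ∈ Finset.univ.filter (fun v : Fin m → ZMod 2 => v ∈ B),
          (-1 : ℂ) ^ (y ⬝ᵥ v).val *
            (Complex.I * Real.tan (2 * Real.pi / 2 ^ l)) ^ hammingNorm v
        = ((Real.cos (2 * Real.pi / 2 ^ l) : ℂ))⁻¹ ^ m) :
    ∑ v ∈ Finset.univ.filter (fun v : Fin m → ZMod 2 => v ∈ B),
        chi (y ⬝ᵥ v) *
          (((Complex.exp ((2 * Real.pi / 2 ^ l : ℝ) * Complex.I)) ^ 2 + 1)
              ^ (m - hammingNorm v) *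
            (1 - (Complex.exp ((2 * Real.pi / 2 ^ l : ℝ) * Complex.I)) ^ 2)
              ^ hammingNorm v)
      = 2 ^ m * (Complex.exp ((2 * Real.pi / 2 ^ l : ℝ) * Complex.I)) ^ m := by
  set θ : ℝ := 2 * Real.pi / 2 ^ l with hθ
  have hθpos : 0 < θ := by
    apply div_pos (by positivity) (by positivity)
  have hθle : θ ≤ Real.pi / 4 := by
    rw [hθ, div_le_div_iff₀ (by positivity) (by norm_num)]
    have h8 : (8 : ℝ) ≤ 2 ^ l := by
      calc (8:ℝ) = 2^3 := by norm_num
      _ ≤ 2^l := by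
        apply pow_le_pow_right₀ (by norm_num) hl
    nlinarith [Real.pi_pos]
  have hcpos : 0 < Real.cos θ := by
    apply Real.cos_pos_of_mem_Ioo
    constructor
    · linarith [Real.pi_pos]
    · linarith [Real.pi_pos]
  set c : ℂ := (Real.cos θ : ℂ) with hc
  set s : ℂ := (Real.sin θ : ℂ) with hs
  have hc0 : c ≠ 0 := by
    simp only [hc, ne_eq, Complex.ofReal_eq_zero]
    exact ne_of_gt hcpos
  have hcs : c ^ 2 + s ^ 2 = 1 := by
    rw [hc, hs]
    push_cast [← Complex.ofReal_pow]
    norm_cast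
    rw [add_comm]
    exact Real.sin_sq_add_cos_sq θ
  set z : ℂ := Complex.exp ((θ : ℝ) * Complex.I) with hzdef
  have hz : z = c + s * Complex.I := by
    rw [hzdef, Complex.exp_mul_I, hc, hs, Complex.ofReal_cos, Complex.ofReal_sin]
  have hq1 : z ^ 2 + 1 = 2 * c * z := by
    rw [hz]
    linear_combination (s^2) * Complex.I_sq - hcs
  have hq2 : 1 - z ^ 2 = -2 * s * Complex.I * z := by
    rw [hz]
    linear_combination (s^2) * Complex.I_sq - hcs
  -- the normalized sum equals 1
  have htan : (Real.tan θ : ℂ) = s / c := by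
    rw [Real.tan_eq_sin_div_cos]
    push_cast
    rw [← Complex.ofReal_sin, ← Complex.ofReal_cos]
  have hnorm : ∑ v ∈ Finset.univ.filter (fun v : Fin m → ZMod 2 => v ∈ B),
      chi (y ⬝ᵥ v) * (c ^ (m - hammingNorm v) * (Complex.I * s) ^ hammingNorm v) = 1 := by
    have h := hsum_l
    have hmul := congrArg (fun t => t * c ^ m) h
    rw [Finset.sum_mul] at hmul
    have hterm : ∀ v ∈ Finset.univ.filter (fun v : Fin m → ZMod 2 => v ∈ B),
        (-1 : ℂ) ^ (y ⬝ᵥ v).val *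
            (Complex.I * (Real.tan θ : ℂ)) ^ hammingNorm v * c ^ m
          = chi (y ⬝ᵥ v) * (c ^ (m - hammingNorm v) * (Complex.I * s) ^ hammingNorm v) := by
      intro v hv
      have hwle : hammingNorm v ≤ m := hammingNorm_le v
      rw [htan]
      have : (Complex.I * (s / c)) ^ hammingNorm v = (Complex.I * s) ^ hammingNorm v / c ^ hammingNorm v := by
        rw [show Complex.I * (s / c) = (Complex.I * s) / c by ring, div_pow]
      rw [this]
      rw [pow_sub₀ c hc0 hwle]
      unfold chi
      field_simp
    rw [Finset.sum_congr rfl hterm] at hmul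
    rw [hmul, inv_pow, inv_mul_cancel₀]
    apply pow_ne_zero _ hc0
  -- main computation
  have hterm2 : ∀ v ∈ Finset.univ.filter (fun v : Fin m → ZMod 2 => v ∈ B),
      chi (y ⬝ᵥ v) * ((z ^ 2 + 1) ^ (m - hammingNorm v) * (1 - z ^ 2) ^ hammingNorm v)
        = 2 ^ m * z ^ m *
          (chi (y ⬝ᵥ v) * (c ^ (m - hammingNorm v) * (Complex.I * s) ^ hammingNorm v)) := by
    intro v hv
    have hvB : v ∈ B := (Finset.mem_filter.mp hv).2
    have hwle : hammingNorm v ≤ m := hammingNorm_le v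
    have hevv : Even (hammingNorm v) := hev v hvB
    rw [hq1, hq2]
    have e1 : (2 * c * z) ^ (m - hammingNorm v)
        = 2 ^ (m - hammingNorm v) * c ^ (m - hammingNorm v) * z ^ (m - hammingNorm v) := by
      rw [mul_pow, mul_pow]
    have e2 : (-2 * s * Complex.I * z) ^ hammingNorm v
        = 2 ^ hammingNorm v * (Complex.I * s) ^ hammingNorm v * z ^ hammingNorm v := by
      have : (-2 * s * Complex.I * z) = -((Complex.I * s) * (2 * z)) := by ring
      rw [this, neg_pow, hevv.neg_one_pow, one_mul, mul_pow, mul_pow]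
      ring
    rw [e1, e2]
    have e3 : (2:ℂ) ^ (m - hammingNorm v) * 2 ^ hammingNorm v = 2 ^ m :=
      pow_sub_mul_pow 2 hwle
    have e4 : z ^ (m - hammingNorm v) * z ^ hammingNorm v = z ^ m :=
      pow_sub_mul_pow z hwle
    calc chi (y ⬝ᵥ v) *
        (2 ^ (m - hammingNorm v) * c ^ (m - hammingNorm v) * z ^ (m - hammingNorm v) *
          (2 ^ hammingNorm v * (Complex.I * s) ^ hammingNorm v * z ^ hammingNorm v))
        = (2 ^ (m - hammingNorm v) * 2 ^ hammingNorm v) * (z ^ (m - hammingNorm v) * z ^ hammingNorm v) *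
          (chi (y ⬝ᵥ v) * (c ^ (m - hammingNorm v) * (Complex.I * s) ^ hammingNorm v)) := by ring
      _ = 2 ^ m * z ^ m *
          (chi (y ⬝ᵥ v) * (c ^ (m - hammingNorm v) * (Complex.I * s) ^ hammingNorm v)) := by
          rw [e3, e4]
  rw [Finset.sum_congr rfl hterm2, ← Finset.mul_sum, hnorm, mul_one]

end Analytic

section Coset
open scoped Classical
open Polynomial

lemma coset_weight (m : ℕ) (y : Fin m → ZMod 2)
    (B : Submodule (ZMod 2) (Fin m → ZMod 2))
    (hev : ∀ v ∈ B, Even (hammingNorm v))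
    (hsum : ∀ l : ℕ, 3 ≤ l →
      ∑ v ∈ Finset.univ.filter (fun v : Fin m → ZMod 2 => v ∈ B),
          (-1 : ℂ) ^ (y ⬝ᵥ v).val *
            (Complex.I * Real.tan (2 * Real.pi / 2 ^ l)) ^ hammingNorm v
        = ((Real.cos (2 * Real.pi / 2 ^ l) : ℂ))⁻¹ ^ m) :
    ∀ u : Fin m → ZMod 2, (∀ v ∈ B, (u + y) ⬝ᵥ v = 0) → 2 * hammingNorm u = m := by
  set S := Finset.univ.filter (fun v : Fin m → ZMod 2 => v ∈ B) with hSdef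
  set T := Finset.univ.filter
    (fun u : Fin m → ZMod 2 => ∀ v ∈ B, (u + y) ⬝ᵥ v = 0) with hTdef
  set sc : ℂ := (S.card : ℂ) with hscdef
  have hsc : sc ≠ 0 := by
    rw [hscdef]
    simp only [ne_eq, Nat.cast_eq_zero, Finset.card_eq_zero]
    intro h
    have : (0 : Fin m → ZMod 2) ∈ S := by
      rw [hSdef]; simp [B.zero_mem]
    rw [h] at this; simp at this
  set R : Polynomial ℂ := ∑ u ∈ T, Polynomial.X ^ hammingNorm u with hRdef
  have hReval : ∀ q : ℂ, R.eval q = ∑ u ∈ T, q ^ hammingNorm u := by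
    intro q
    rw [hRdef, Polynomial.eval_finset_sum]
    simp
  set Q : Polynomial ℂ := (Polynomial.C sc * R) ^ 2
    - Polynomial.C ((4 : ℂ) ^ m) * Polynomial.X ^ m with hQdef
  have hroot : ∀ k : ℕ,
      Q.eval ((Complex.exp ((2 * Real.pi / 2 ^ (k + 3) : ℝ) * Complex.I)) ^ 2) = 0 := by
    intro k
    set l := k + 3 with hldef
    have hl : 3 ≤ l := by omega
    set z : ℂ := Complex.exp ((2 * Real.pi / 2 ^ l : ℝ) * Complex.I) with hzdef
    have hC := lemmaC m l hl y B hev (hsum l hl)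
    have hA := lemmaA B y (z ^ 2)
    rw [hQdef]
    simp only [Polynomial.eval_sub, Polynomial.eval_mul, Polynomial.eval_pow,
      Polynomial.eval_C, Polynomial.eval_X]
    rw [hReval]
    have e1 : sc * ∑ u ∈ T, (z ^ 2) ^ hammingNorm u = 2 ^ m * z ^ m := by
      rw [← hA, ← hC]
    rw [e1]
    have h4 : (2 ^ m * z ^ m : ℂ) ^ 2 = 4 ^ m * (z ^ 2) ^ m := by
      rw [← mul_pow, ← pow_mul, mul_comm m 2, pow_mul, mul_pow, mul_pow]
      norm_num
    rw [h4, sub_self]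
  have hQ0 : Q = 0 := by
    by_contra hne
    have hfin := Polynomial.finite_setOf_isRoot hne
    have hinj : Function.Injective
        (fun k : ℕ => (Complex.exp ((2 * Real.pi / 2 ^ (k + 3) : ℝ) * Complex.I)) ^ 2) := by
      intro k k' h
      simp only at h
      have hsq : ∀ j : ℕ, (Complex.exp ((2 * Real.pi / 2 ^ (j + 3) : ℝ) * Complex.I)) ^ 2
          = Complex.exp ((4 * Real.pi / 2 ^ (j + 3) : ℝ) * Complex.I) := by
        intro j
        rw [← Complex.exp_nat_mul]
        congr 1
        push_cast
        ring
      rw [hsq, hsq] at h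
      have hre := congrArg Complex.re h
      rw [Complex.exp_ofReal_mul_I_re, Complex.exp_ofReal_mul_I_re] at hre
      have hmem : ∀ j : ℕ, (4 * Real.pi / 2 ^ (j + 3) : ℝ) ∈ Set.Icc 0 Real.pi := by
        intro j
        constructor
        · positivity
        · rw [div_le_iff₀ (by positivity)]
          have : (8 : ℝ) ≤ 2 ^ (j + 3) := by
            calc (8:ℝ) = 2 ^ 3 := by norm_num
            _ ≤ 2 ^ (j + 3) := by apply pow_le_pow_right₀ (by norm_num) (by omega)
          nlinarith [Real.pi_pos]
      have heq := Real.injOn_cos (hmem k) (hmem k') hre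
      have hp : (2 : ℝ) ^ (k' + 3) = 2 ^ (k + 3) := by
        rw [div_eq_div_iff (by positivity) (by positivity)] at heq
        exact mul_left_cancel₀ (show (4:ℝ) * Real.pi ≠ 0 by positivity) heq
      have h23 : (2 : ℕ) ^ (k + 3) = 2 ^ (k' + 3) := by exact_mod_cast hp.symm
      have := Nat.pow_right_injective (le_refl 2) h23
      omega
    have hinf := Set.infinite_of_injective_forall_mem
      (s := {x : ℂ | Q.IsRoot x}) hinj (fun k => hroot k)
    exact hinf hfin
  have hpoly : (Polynomial.C sc * R) ^ 2 = Polynomial.C ((4 : ℂ) ^ m) * Polynomial.X ^ m := by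
    have := hQ0
    rw [hQdef, sub_eq_zero] at this
    exact this
  intro u₀ hu₀
  by_contra hne
  have hu₀T : u₀ ∈ T := by
    rw [hTdef, Finset.mem_filter]
    exact ⟨Finset.mem_univ _, hu₀⟩
  set k := 2 * hammingNorm u₀ with hkdef
  have hcoeff := congrArg (fun p => Polynomial.coeff p k) hpoly
  have e2 : (Polynomial.C sc * R) ^ 2 = Polynomial.C (sc * sc) * (R * R) := by
    rw [mul_pow, ← Polynomial.C_pow, pow_two, pow_two]
  rw [e2, Polynomial.coeff_C_mul, Polynomial.coeff_C_mul, Polynomial.coeff_X_pow] at hcoeff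
  rw [if_neg (by omega)] at hcoeff
  rw [mul_zero] at hcoeff
  have hRR : (R * R).coeff k = 0 := by
    rcases mul_eq_zero.mp hcoeff with h | h
    · exact absurd h (by simp [hsc])
    · exact h
  have hexp : (R * R).coeff k
      = ∑ u1 ∈ T, ∑ u2 ∈ T,
          (if k = hammingNorm u1 + hammingNorm u2 then (1 : ℂ) else 0) := by
    rw [hRdef, Finset.sum_mul_sum]
    rw [Polynomial.finset_sum_coeff]
    refine Finset.sum_congr rfl fun u1 _ => ?_
    rw [Polynomial.finset_sum_coeff]
    refine Finset.sum_congr rfl fun u2 _ => ?_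
    rw [← pow_add, Polynomial.coeff_X_pow]
  rw [hexp] at hRR
  set N : ℕ := ∑ u1 ∈ T, ∑ u2 ∈ T,
      (if k = hammingNorm u1 + hammingNorm u2 then 1 else 0) with hNdef
  have hN : (N : ℂ) = 0 := by
    rw [hNdef, ← hRR, Nat.cast_sum]
    refine Finset.sum_congr rfl fun u1 _ => ?_
    rw [Nat.cast_sum]
    refine Finset.sum_congr rfl fun u2 _ => ?_
    split <;> simp
  have hN0 : N = 0 := by exact_mod_cast hN
  have h1 : (if k = hammingNorm u₀ + hammingNorm u₀ then 1 else 0) = 0 := by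
    have h2 := (Finset.sum_eq_zero_iff.mp (hNdef ▸ hN0)) u₀ hu₀T
    exact (Finset.sum_eq_zero_iff.mp h2) u₀ hu₀T
  rw [if_pos (by omega)] at h1
  omega

end Coset

section DoubleDual
open scoped Classical

variable {m : ℕ}

/-- The linear map sending `x` to the functional `v ↦ x ⬝ᵥ v`. -/
noncomputable def dotDual (x : Fin m → ZMod 2) :
    Module.Dual (ZMod 2) (Fin m → ZMod 2) where
  toFun v := x ⬝ᵥ v
  map_add' a b := dotProduct_add x a b
  map_smul' c a := by simp [dotProduct_smul]

lemma double_dual (B : Submodule (ZMod 2) (Fin m → ZMod 2)) (w : Fin m → ZMod 2)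
    (h : ∀ x : Fin m → ZMod 2, (∀ v ∈ B, x ⬝ᵥ v = 0) → x ⬝ᵥ w = 0) : w ∈ B := by
  rw [← Subspace.forall_mem_dualAnnihilator_apply_eq_zero_iff B w]
  intro ψ hψ
  set x : Fin m → ZMod 2 := fun j => ψ (Pi.single j 1) with hx
  have hφψ : dotDual x = ψ := by
    apply Module.Basis.ext (Pi.basisFun (ZMod 2) (Fin m))
    intro j
    simp only [Pi.basisFun_apply]
    show x ⬝ᵥ _ = _
    rw [dotProduct_single]
    simp [hx]
  have hxB : ∀ v ∈ B, x ⬝ᵥ v = 0 := by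
    intro v hv
    have : dotDual x v = ψ v := by rw [hφψ]
    rw [show x ⬝ᵥ v = dotDual x v from rfl, this]
    exact (Submodule.mem_dualAnnihilator ψ).mp hψ v hv
  have := h x hxB
  rwa [show x ⬝ᵥ w = dotDual x w from rfl, hφψ] at this

end DoubleDual

section Combinatorial
open scoped Classical

lemma zmod2_add_self (a : ZMod 2) : a + a = 0 := by revert a; decide
lemma zmod2_add_eq_zero {a b : ZMod 2} (h : a + b = 0) : a = b := by revert a b h; decide
lemma zmod2_addb_addb (a b : ZMod 2) : a + b + b = a := by revert a b; decide
lemma zmod2_neg_pow (a : ZMod 2) : (-1 : ℤ) ^ ((a + 1).val) = -(-1 : ℤ) ^ a.val := by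
  revert a; decide
lemma zmod2_val_add_one (a : ZMod 2) : (((a + 1).val : ℤ)) = 1 - (a.val : ℤ) := by
  revert a; decide
lemma zmod2_val_sub (a : ZMod 2) :
    ((a.val : ℤ)) - (((1 + a).val : ℤ)) = 2 * (a.val : ℤ) - 1 := by
  revert a; decide

lemma hammingNorm_single_one {m : ℕ} (i : Fin m) :
    hammingNorm (Pi.single i (1 : ZMod 2) : Fin m → ZMod 2) = 1 := by
  have : (Finset.univ.filter (fun j => (Pi.single i (1 : ZMod 2) : Fin m → ZMod 2) j ≠ 0)) = {i} := by
    ext j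
    simp only [Finset.mem_filter, Finset.mem_univ, true_and, Finset.mem_singleton]
    rcases eq_or_ne j i with h | h
    · subst h; simp
    · simp [Pi.single_apply, h]
  show (Finset.univ.filter (fun j => (Pi.single i (1 : ZMod 2) : Fin m → ZMod 2) j ≠ 0)).card = 1
  rw [this, Finset.card_singleton]

lemma component_balance (m : ℕ) (y : Fin m → ZMod 2)
    (B : Submodule (ZMod 2) (Fin m → ZMod 2))
    (hev : ∀ v ∈ B, Even (hammingNorm v))
    (G : SimpleGraph (Fin m))
    (hG : ∀ i j, G.Adj i j ↔ i ≠ j ∧ (Pi.single i (1 : ZMod 2) + Pi.single j 1) ∈ B)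
    (hw : ∀ u : Fin m → ZMod 2, (∀ v ∈ B, (u + y) ⬝ᵥ v = 0) → 2 * hammingNorm u = m)
    (i : Fin m) :
    2 * (Finset.univ.filter (fun j => G.Reachable i j ∧ y j ≠ 0)).card
      = (Finset.univ.filter (fun j => G.Reachable i j)).card := by
  set U := Finset.univ.filter
    (fun x : Fin m → ZMod 2 => ∀ v ∈ B, x ⬝ᵥ v = 0) with hUdef
  have hUmem : ∀ x : Fin m → ZMod 2, x ∈ U ↔ ∀ v ∈ B, x ⬝ᵥ v = 0 := by
    intro x; rw [hUdef, Finset.mem_filter]; simp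
  have hyy : y + y = 0 := funext fun j => zmod2_add_self (y j)
  have hw' : ∀ x ∈ U, 2 * hammingNorm (x + y) = m := by
    intro x hx
    refine hw (x + y) fun v hv => ?_
    have e : (x + y) + y = x := by rw [add_assoc, hyy, add_zero]
    rw [e]
    exact (hUmem x).mp hx v hv
  have reach_eq : ∀ x ∈ U, ∀ a b : Fin m, G.Reachable a b → x a = x b := by
    intro x hx a b hr
    obtain ⟨p⟩ := hr
    induction p with
    | nil => rfl
    | @cons u v w hadj q ih =>
      have hB := ((hG u v).mp hadj).2
      have h0 := (hUmem x).mp hx _ hB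
      rw [dotProduct_add, dotProduct_single, dotProduct_single,
        mul_one, mul_one] at h0
      rw [zmod2_add_eq_zero h0]
      exact ih
  -- existence of a dual vector separating non-reachable pairs
  have hsep : ∀ a b : Fin m, (∀ x ∈ U, x a = x b) → a = b ∨ G.Adj a b := by
    intro a b hall
    rcases eq_or_ne a b with h | h
    · exact Or.inl h
    · refine Or.inr ((hG a b).mpr ⟨h, ?_⟩)
      apply double_dual
      intro x hx
      rw [dotProduct_add, dotProduct_single, dotProduct_single,
        mul_one, mul_one, hall x ((hUmem x).mpr hx)]
      exact zmod2_add_self _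
  -- an element of U with value 1 at i
  have hx₀ : ∃ x₀ ∈ U, x₀ i = 1 := by
    by_contra hcon
    push_neg at hcon
    have hall : ∀ x : Fin m → ZMod 2, (∀ v ∈ B, x ⬝ᵥ v = 0) → x ⬝ᵥ Pi.single i 1 = 0 := by
      intro x hx
      rw [dotProduct_single, mul_one]
      rcases zmod2_cases (x i) with h | h
      · exact h
      · exact absurd h (hcon x ((hUmem x).mpr hx))
    have hmem := double_dual B _ hall
    have := hev _ hmem
    rw [hammingNorm_single_one] at this
    exact (Nat.not_even_iff.mpr rfl) this
  obtain ⟨x₀, hx₀U, hx₀i⟩ := hx₀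
  -- closure of U under addition
  have hUadd : ∀ x ∈ U, ∀ x' ∈ U, x + x' ∈ U := by
    intro x hx x' hx'
    rw [hUmem]
    intro v hv
    rw [add_dotProduct, (hUmem x).mp hx v hv, (hUmem x').mp hx' v hv, add_zero]
  have hshiftmem : ∀ x₁ ∈ U, ∀ x, x ∈ U ↔ x + x₁ ∈ U := by
    intro x₁ hx₁ x
    constructor
    · intro hx; exact hUadd _ hx _ hx₁
    · intro hx
      have := hUadd _ hx _ hx₁
      rwa [show x + x₁ + x₁ = x from funext fun j => zmod2_addb_addb (x j) (x₁ j)] at this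
  have hshift : ∀ x₁ ∈ U, ∀ f : (Fin m → ZMod 2) → ℤ,
      ∑ x ∈ U, f (x + x₁) = ∑ x ∈ U, f x := by
    intro x₁ hx₁ f
    exact Finset.sum_equiv (Equiv.addRight x₁) (fun x => hshiftmem x₁ hx₁ x) (fun x _ => rfl)
  -- character sum over U vanishes
  set E : ℤ := ∑ x ∈ U, (-1 : ℤ) ^ ((x i).val) with hEdef
  have hE : E = 0 := by
    have h1 := hshift x₀ hx₀U (fun x => (-1 : ℤ) ^ ((x i).val))
    have h2 : ∀ x ∈ U, (-1 : ℤ) ^ (((x + x₀) i).val) = -(-1 : ℤ) ^ ((x i).val) := by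
      intro x _
      show (-1 : ℤ) ^ ((x i + x₀ i).val) = _
      rw [hx₀i]
      exact zmod2_neg_pow (x i)
    rw [Finset.sum_congr rfl h2, Finset.sum_neg_distrib] at h1
    rw [hEdef]
    linarith [h1]
  -- counts of the two halves
  set h1c := (U.filter (fun x => x i = 1)).card with h1cdef
  set h0c := (U.filter (fun x => ¬ x i = 1)).card with h0cdef
  have hsplitE : E = (h0c : ℤ) - (h1c : ℤ) := by
    rw [hEdef, ← Finset.sum_filter_add_sum_filter_not U (fun x => x i = 1)]
    have e1 : ∀ x ∈ U.filter (fun x => x i = 1), (-1 : ℤ) ^ ((x i).val) = -1 := by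
      intro x hx
      rw [(Finset.mem_filter.mp hx).2]
      decide
    have e2 : ∀ x ∈ U.filter (fun x => ¬ x i = 1), (-1 : ℤ) ^ ((x i).val) = 1 := by
      intro x hx
      have := (Finset.mem_filter.mp hx).2
      rcases zmod2_cases (x i) with h | h
      · rw [h]; decide
      · exact absurd h this
    rw [Finset.sum_congr rfl e1, Finset.sum_congr rfl e2, Finset.sum_const, Finset.sum_const,
      nsmul_eq_mul, nsmul_eq_mul, ← h1cdef, ← h0cdef]
    ring
  have hcount : (h0c : ℤ) = h1c := by linarith [hsplitE, hE]
  have hh1pos : 1 ≤ h1c := by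
    rw [h1cdef]
    refine Finset.card_pos.mpr ⟨x₀, ?_⟩
    rw [Finset.mem_filter]
    exact ⟨hx₀U, hx₀i⟩
  -- the per-coordinate signed sums
  set T : Fin m → ℤ :=
    fun j => ∑ x ∈ U, (-1 : ℤ) ^ ((x i).val) * (((x j + y j).val : ℤ)) with hTdef
  have hTj : ∀ j, T j = ∑ x ∈ U, (-1 : ℤ) ^ ((x i).val) * (((x j + y j).val : ℤ)) :=
    fun j => rfl
  have hsumT : ∑ j, T j = 0 := by
    have swap : (∑ j, T j)
        = ∑ x ∈ U, (-1 : ℤ) ^ ((x i).val) * ((hammingNorm (x + y) : ℕ) : ℤ) := by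
      rw [hTdef, Finset.sum_comm]
      refine Finset.sum_congr rfl fun x _ => ?_
      rw [← Finset.mul_sum]
      congr 1
      rw [hammingNorm_eq_sum, Nat.cast_sum]
      exact Finset.sum_congr rfl fun j _ => rfl
    have h2 : (2 : ℤ) * ∑ j, T j = ∑ x ∈ U, (-1 : ℤ) ^ ((x i).val) * (m : ℤ) := by
      rw [swap, Finset.mul_sum]
      refine Finset.sum_congr rfl fun x hx => ?_
      have hx2 := hw' x hx
      have hx3 : ((2 * hammingNorm (x + y) : ℕ) : ℤ) = (m : ℤ) := by exact_mod_cast congrArg Nat.cast hx2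
      push_cast at hx3
      rw [← hx3]
      ring
    have h3 : ∑ x ∈ U, (-1 : ℤ) ^ ((x i).val) * (m : ℤ) = 0 := by
      rw [← Finset.sum_mul, ← hEdef, hE, zero_mul]
    rw [h3] at h2
    linarith
  have hTreach : ∀ j, G.Reachable i j → T j = (h1c : ℤ) * (2 * ((y j).val : ℤ) - 1) := by
    intro j hr
    have step : T j = ∑ x ∈ U, (-1 : ℤ) ^ ((x i).val) * (((x i + y j).val : ℤ)) := by
      rw [hTj j]
      refine Finset.sum_congr rfl fun x hx => ?_
      rw [reach_eq x hx i j hr]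
    rw [step, ← Finset.sum_filter_add_sum_filter_not U (fun x => x i = 1)]
    have e1 : ∀ x ∈ U.filter (fun x => x i = 1),
        (-1 : ℤ) ^ ((x i).val) * (((x i + y j).val : ℤ))
          = -(((1 + y j).val : ℤ)) := by
      intro x hx
      rw [(Finset.mem_filter.mp hx).2]
      norm_num [val_one']
    have e2 : ∀ x ∈ U.filter (fun x => ¬ x i = 1),
        (-1 : ℤ) ^ ((x i).val) * (((x i + y j).val : ℤ))
          = (((y j).val : ℤ)) := by
      intro x hx
      have hx0 : x i = 0 := by
        rcases zmod2_cases (x i) with h | h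
        · exact h
        · exact absurd h (Finset.mem_filter.mp hx).2
      rw [hx0, val_zero', zero_add]
      norm_num
    rw [Finset.sum_congr rfl e1, Finset.sum_congr rfl e2, Finset.sum_const, Finset.sum_const]
    rw [← h1cdef, ← h0cdef]
    have hv := zmod2_val_sub (y j)
    rw [nsmul_eq_mul, nsmul_eq_mul, hcount]
    linear_combination (h1c : ℤ) * hv
  have hTnon : ∀ j, ¬ G.Reachable i j → T j = 0 := by
    intro j hnr
    have hx₁ : ∃ x₁ ∈ U, x₁ i + x₁ j = 1 := by
      by_contra hcon
      push_neg at hcon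
      have hall : ∀ x ∈ U, x i = x j := by
        intro x hx
        rcases zmod2_cases (x i + x j) with h | h
        · exact zmod2_add_eq_zero h
        · exact absurd h (hcon x hx)
      rcases hsep i j hall with h | h
      · subst h; exact hnr (SimpleGraph.Reachable.refl i)
      · exact hnr h.reachable
    obtain ⟨x₁, hx₁U, hx₁sum⟩ := hx₁
    have hsh := hshift x₁ hx₁U
      (fun x => (-1 : ℤ) ^ ((x i).val) * (((x j + y j).val : ℤ)))
    rcases zmod2_cases (x₁ i) with hxi | hxi
    · have hxj : x₁ j = 1 := by rwa [hxi, zero_add] at hx₁sum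
      have e : ∀ x ∈ U, (-1 : ℤ) ^ (((x + x₁) i).val) * ((((x + x₁) j + y j).val : ℤ))
          = (-1 : ℤ) ^ ((x i).val) * (1 - ((x j + y j).val : ℤ)) := by
        intro x _
        show (-1 : ℤ) ^ ((x i + x₁ i).val) * (((x j + x₁ j + y j).val : ℤ)) = _
        rw [hxi, add_zero, hxj]
        congr 1
        rw [show x j + 1 + y j = (x j + y j) + 1 by ring, zmod2_val_add_one]
      rw [Finset.sum_congr rfl e] at hsh
      have e' : ∑ x ∈ U, (-1 : ℤ) ^ ((x i).val) * (1 - ((x j + y j).val : ℤ))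
          = E - T j := by
        rw [hEdef, hTj j, ← Finset.sum_sub_distrib]
        exact Finset.sum_congr rfl fun x _ => by ring
      rw [e', hE, hTj j] at hsh
      linarith [hTj j, hsh]
    · have hxj : x₁ j = 0 := by
        rcases zmod2_cases (x₁ j) with h | h
        · exact h
        · rw [hxi, h] at hx₁sum
          exact absurd hx₁sum (by decide)
      have e : ∀ x ∈ U, (-1 : ℤ) ^ (((x + x₁) i).val) * ((((x + x₁) j + y j).val : ℤ))
          = -((-1 : ℤ) ^ ((x i).val) * (((x j + y j).val : ℤ))) := by
        intro x _
        show (-1 : ℤ) ^ ((x i + x₁ i).val) * (((x j + x₁ j + y j).val : ℤ)) = _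
        rw [hxi, hxj, add_zero, zmod2_neg_pow]
        ring
      rw [Finset.sum_congr rfl e, Finset.sum_neg_distrib, ← hTj j] at hsh
      have := hTj j
      linarith [hsh]
  -- put it together
  set Γ := Finset.univ.filter (fun j => G.Reachable i j) with hΓdef
  have hfinal : ∑ j ∈ Γ, T j = 0 := by
    rw [← hsumT, ← Finset.sum_filter_add_sum_filter_not Finset.univ
      (fun j => G.Reachable i j)]
    rw [Finset.sum_eq_zero fun j hj => hTnon j (Finset.mem_filter.mp hj).2, add_zero]
  have hval : ∑ j ∈ Γ, T j
      = (h1c : ℤ) * (2 * (∑ j ∈ Γ, ((y j).val : ℤ)) - (Γ.card : ℤ)) := by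
    rw [Finset.sum_congr rfl (fun j hj => hTreach j (Finset.mem_filter.mp hj).2)]
    rw [← Finset.mul_sum]
    congr 1
    rw [Finset.sum_sub_distrib, ← Finset.mul_sum, Finset.sum_const, nsmul_eq_mul, mul_one]
  have h2W : 2 * (∑ j ∈ Γ, ((y j).val : ℤ)) = (Γ.card : ℤ) := by
    have hz := hfinal
    rw [hval] at hz
    rcases mul_eq_zero.mp hz with h | h
    · exfalso
      have h0 : h1c = 0 := by exact_mod_cast h
      rw [h0] at hh1pos
      exact absurd hh1pos (by norm_num)
    · linarith
  have hWcard : ∑ j ∈ Γ, ((y j).val : ℤ) = ((Γ.filter (fun j => y j ≠ 0)).card : ℤ) := by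
    rw [Finset.card_filter, Nat.cast_sum]
    refine Finset.sum_congr rfl fun j _ => ?_
    rcases zmod2_cases (y j) with h | h <;> simp [h, val_zero', val_one']
  have hΓeq : Γ.filter (fun j => y j ≠ 0)
      = Finset.univ.filter (fun j => G.Reachable i j ∧ y j ≠ 0) := by
    rw [hΓdef, Finset.filter_filter]
  have hfin2 : (2 : ℤ) * ((Γ.filter (fun j => y j ≠ 0)).card : ℤ) = (Γ.card : ℤ) := by
    rw [← hWcard]
    exact h2W
  rw [← hΓeq]
  exact_mod_cast hfin2

end Combinatorial


open scoped Classical in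
/-- necessity direction of Theorem 8, in coding-theoretic form.
Let `B ⊆ F₂^m` be a binary linear code with all codeword weights even, `ε_v = (−1)^{y·v}`,
and let `G` be the graph on `{1,…,m}` with `i ~ j` iff `i ≠ j` and `e_i + e_j ∈ B`.
If `Σ_{v∈B} ε_v (i tan(2π/2^l))^{w_H(v)} = (sec(2π/2^l))^m` for every `l ≥ 3`, then `G` has no
isolated vertices, every connected component `Γ_k` has even size `N_k`, and
`w_H(y|_{Γ_k}) = N_k/2` for every `k`. -/
theorem balanced_components_necessary (m : ℕ) (hm : 1 ≤ m) (y : Fin m → ZMod 2)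
    (B : Submodule (ZMod 2) (Fin m → ZMod 2))
    (hev : ∀ v ∈ B, Even (hammingNorm v))
    (G : SimpleGraph (Fin m))
    (hG : ∀ i j, G.Adj i j ↔ i ≠ j ∧ (Pi.single i (1 : ZMod 2) + Pi.single j 1) ∈ B)
    (hsum : ∀ l : ℕ, 3 ≤ l →
      ∑ v ∈ Finset.univ.filter (fun v : Fin m → ZMod 2 => v ∈ B),
          (-1 : ℂ) ^ (y ⬝ᵥ v).val *
            (Complex.I * Real.tan (2 * Real.pi / 2 ^ l)) ^ hammingNorm v
        = ((Real.cos (2 * Real.pi / 2 ^ l) : ℂ))⁻¹ ^ m) :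
    (∀ i : Fin m, ∃ j, G.Adj i j) ∧
    (∀ i : Fin m,
      Even ({j | G.Reachable i j}.ncard) ∧
      2 * ({j | G.Reachable i j ∧ y j ≠ 0}.ncard) = {j | G.Reachable i j}.ncard) := by
  classical
  have hw := coset_weight m y B hev hsum
  have hbal : ∀ i : Fin m,
      2 * (Finset.univ.filter (fun j => G.Reachable i j ∧ y j ≠ 0)).card
        = (Finset.univ.filter (fun j => G.Reachable i j)).card :=
    fun i => component_balance m y B hev G hG hw i
  have hncard1 : ∀ i, ({j | G.Reachable i j}.ncard)
      = (Finset.univ.filter (fun j => G.Reachable i j)).card := by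
    intro i
    rw [Set.ncard_eq_toFinset_card', Set.toFinset_setOf]
  have hncard2 : ∀ i, ({j | G.Reachable i j ∧ y j ≠ 0}.ncard)
      = (Finset.univ.filter (fun j => G.Reachable i j ∧ y j ≠ 0)).card := by
    intro i
    rw [Set.ncard_eq_toFinset_card', Set.toFinset_setOf]
  have hiso : ∀ i : Fin m, ∃ j, G.Adj i j := by
    intro i
    by_contra hcon
    push_neg at hcon
    have hΓ : Finset.univ.filter (fun j => G.Reachable i j) = {i} := by
      ext j
      simp only [Finset.mem_filter, Finset.mem_univ, true_and, Finset.mem_singleton]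
      constructor
      · intro hr
        obtain ⟨p⟩ := hr
        cases p with
        | nil => rfl
        | cons hadj q => exact absurd hadj (hcon _)
      · rintro rfl; exact SimpleGraph.Reachable.refl _
    have hb := hbal i
    rw [hΓ, Finset.card_singleton] at hb
    omega
  refine ⟨hiso, fun i => ?_⟩
  constructor
  · rw [hncard1 i, ← hbal i]
    exact even_two_mul _
  · rw [hncard1 i, hncard2 i]
    exact hbal i
end

section
/- Let m ≥ 1, let y ∈ F₂^m, let B ⊆ F₂^m be a binary linear code all of whose codewords have even Hamming weight, and extend ε to all of F₂^m by ε_v = (−1)^{y·v}. Let G be the simple graph on {1,…,m} in which distinct i and j are adjacent if and only if e_i + e_j ∈ B, with connected components Γ₁,…,Γ_t of sizes N_k = |Γ_k|. Suppose every N_k is even (in particular G has no isolated vertices) and w_H(y|_{Γ_k}) = N_k/2 for every k. Then for every integer l ≥ 3: (a) Σ_{v∈B} ε_v (i tan(2π/2^l))^{w_H(v)} = (sec(2π/2^l))^m, and (b) for every ω ∈ F₂^m ∖ B, Σ_{v∈B} ε_v (i tan(2π/2^l))^{w_H(v + ω)} = 0. -/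
open Matrix Finset

namespace BalancedAux

open scoped Classical

noncomputable def χ (a : ZMod 2) : ℂ := (-1 : ℂ) ^ a.val

lemma zmod2_cases (a : ZMod 2) : a = 0 ∨ a = 1 := by revert a; decide
lemma zmod2_add_self (a : ZMod 2) : a + a = 0 := by revert a; decide
lemma zmod2_ne_zero (a : ZMod 2) (h : a ≠ 0) : a = 1 := by revert a; decide
lemma zmod2_eq_of_add_eq_zero (a b : ZMod 2) (h : a + b = 0) : b = a := by
  revert a b; decide

lemma χ_zero : χ 0 = 1 := rfl

lemma χ_one : χ 1 = -1 := by
  have h : ((1 : ZMod 2)).val = 1 := rfl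
  simp [χ, h]

lemma χ_add (a b : ZMod 2) : χ (a + b) = χ a * χ b := by
  rcases zmod2_cases a with ha | ha <;> rcases zmod2_cases b with hb | hb <;>
    subst ha hb <;>
    simp [show (1 : ZMod 2) + 1 = 0 by decide, χ_zero, χ_one]

lemma χ_sum {ι : Type*} (s : Finset ι) (f : ι → ZMod 2) :
    χ (∑ j ∈ s, f j) = ∏ j ∈ s, χ (f j) := by
  induction s using Finset.cons_induction with
  | empty => simp [χ_zero]
  | cons a s ha ih => rw [Finset.sum_cons, Finset.prod_cons, χ_add, ih]

lemma sum_zmod2 (f : ZMod 2 → ℂ) : (∑ s : ZMod 2, f s) = f 0 + f 1 := by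
  rw [show (univ : Finset (ZMod 2)) = {0, 1} from rfl]
  rw [Finset.sum_insert (by decide), Finset.sum_singleton]

variable {m : ℕ}

lemma pi_add_self (a : Fin m → ZMod 2) : a + a = 0 := by
  funext j; exact zmod2_add_self (a j)

lemma pi_add_cancel (a b : Fin m → ZMod 2) : a + (a + b) = b := by
  rw [← add_assoc, pi_add_self, zero_add]

noncomputable def E (θ : ℝ) (m : ℕ) (x : Fin m → ZMod 2) : ℂ :=
  Complex.exp (θ * Complex.I) ^ (m - hammingNorm x) *
    Complex.exp (-(θ * Complex.I)) ^ hammingNorm x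

lemma hN_eq (u : Fin m → ZMod 2) :
    hammingNorm u = (univ.filter (fun j => ¬ u j = 0)).card := rfl

lemma hN_le (u : Fin m → ZMod 2) : hammingNorm u ≤ m := by
  rw [hN_eq]
  simpa using Finset.card_filter_le (univ : Finset (Fin m)) (fun j => ¬ u j = 0)

lemma card_eq_zero_filter (u : Fin m → ZMod 2) :
    (univ.filter (fun j => u j = 0)).card = m - hammingNorm u := by
  have h := Finset.card_filter_add_card_filter_not
    (s := (univ : Finset (Fin m))) (p := fun j => u j = 0)
  simp only [Finset.card_univ, Fintype.card_fin] at h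
  rw [hN_eq]
  omega

lemma step_a (θ : ℝ) (hθ : Real.cos θ ≠ 0) (u : Fin m → ZMod 2) :
    ((Real.cos θ : ℂ)) ^ m * (Complex.I * (Real.tan θ : ℂ)) ^ hammingNorm u
      = ∏ j, (if u j = 0 then (Real.cos θ : ℂ) else Complex.I * (Real.sin θ : ℂ)) := by
  have hc : ((Real.cos θ : ℂ)) ≠ 0 := Complex.ofReal_ne_zero.mpr hθ
  have ht : (Real.tan θ : ℂ) = (Real.sin θ : ℂ) / (Real.cos θ : ℂ) := by
    rw [Real.tan_eq_sin_div_cos]; push_cast; ring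
  rw [Finset.prod_ite (fun _ => (Real.cos θ : ℂ)) (fun _ => Complex.I * (Real.sin θ : ℂ))]
  rw [Finset.prod_const, Finset.prod_const, card_eq_zero_filter, ← hN_eq]
  have hle := hN_le u
  set w := hammingNorm u with hw
  have h5 : ((Real.cos θ : ℂ)) ^ m = ((Real.cos θ : ℂ)) ^ (m - w) * ((Real.cos θ : ℂ)) ^ w := by
    rw [← pow_add]; congr 1; omega
  have h2 : ((Real.cos θ : ℂ)) ^ w * (Complex.I * ((Real.sin θ:ℂ) / (Real.cos θ:ℂ))) ^ w
      = (Complex.I * (Real.sin θ : ℂ)) ^ w := by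
    rw [← mul_pow]
    congr 1
    field_simp
  rw [ht, h5, mul_assoc, h2]

lemma c_eq (θ : ℝ) (b : ZMod 2) :
    (if b = 0 then (Real.cos θ : ℂ) else Complex.I * (Real.sin θ : ℂ))
      = ∑ s : ZMod 2, (if s = 0 then Complex.exp (θ * Complex.I)
          else χ b * Complex.exp (-(θ * Complex.I))) / 2 := by
  rw [sum_zmod2]
  rw [if_pos rfl, if_neg (by decide : ¬ (1:ZMod 2) = 0)]
  rcases zmod2_cases b with hb | hb <;> subst hb
  · rw [if_pos rfl, χ_zero, Complex.ofReal_cos]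
    simp only [Complex.cos, neg_mul]
    ring
  · rw [if_neg (by decide : ¬ (1:ZMod 2) = 0), χ_one, Complex.ofReal_sin]
    simp only [Complex.sin, neg_mul]
    linear_combination ((Complex.exp (-((θ:ℂ) * Complex.I)) - Complex.exp ((θ:ℂ) * Complex.I))/2) * Complex.I_sq

lemma step_b (θ : ℝ) (u : Fin m → ZMod 2) :
    (∏ j, (if u j = 0 then (Real.cos θ : ℂ) else Complex.I * (Real.sin θ : ℂ)))
      = ∑ x : Fin m → ZMod 2, χ (x ⬝ᵥ u) * E θ m x / 2 ^ m := by
  have h1 : (∏ j, (if u j = 0 then (Real.cos θ : ℂ) else Complex.I * (Real.sin θ : ℂ)))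
      = ∏ j, ∑ s : ZMod 2, (if s = 0 then Complex.exp (θ * Complex.I)
          else χ (u j) * Complex.exp (-(θ * Complex.I))) / 2 :=
    Finset.prod_congr rfl (fun j _ => c_eq θ (u j))
  rw [h1, Finset.prod_univ_sum]
  rw [Fintype.piFinset_univ]
  refine Finset.sum_congr rfl (fun x _ => ?_)
  rw [Finset.prod_div_distrib, Finset.prod_const, Finset.card_univ, Fintype.card_fin]
  congr 1
  have h2 : (∏ j, (if x j = 0 then Complex.exp (θ * Complex.I)
        else χ (u j) * Complex.exp (-(θ * Complex.I))))
      = ∏ j, (χ (x j * u j) *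
          (if x j = 0 then Complex.exp (θ * Complex.I) else Complex.exp (-(θ * Complex.I)))) := by
    refine Finset.prod_congr rfl (fun j _ => ?_)
    rcases zmod2_cases (x j) with h | h <;> rw [h]
    · rw [if_pos rfl, if_pos rfl, zero_mul, χ_zero, one_mul]
    · rw [if_neg (by decide : ¬ (1:ZMod 2) = 0), if_neg (by decide : ¬ (1:ZMod 2) = 0), one_mul]
  rw [h2, Finset.prod_mul_distrib]
  have h3 : (∏ j, χ (x j * u j)) = χ (x ⬝ᵥ u) := by
    rw [show x ⬝ᵥ u = ∑ j, x j * u j from rfl, χ_sum]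
  have h4 : (∏ j, (if x j = 0 then Complex.exp (θ * Complex.I)
        else Complex.exp (-(θ * Complex.I)))) = E θ m x := by
    rw [Finset.prod_ite (fun _ => Complex.exp (θ * Complex.I))
      (fun _ => Complex.exp (-(θ * Complex.I))), Finset.prod_const, Finset.prod_const,
      card_eq_zero_filter, ← hN_eq, E]
  rw [h3, h4]

lemma expand (θ : ℝ) (hθ : Real.cos θ ≠ 0) (u : Fin m → ZMod 2) :
    ((Real.cos θ : ℂ)) ^ m * (Complex.I * (Real.tan θ : ℂ)) ^ hammingNorm u
      = ∑ x : Fin m → ZMod 2, χ (x ⬝ᵥ u) * E θ m x / 2 ^ m :=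
  (step_a θ hθ u).trans (step_b θ u)

/-- Character sum over a subgroup-like set, vanishing case. -/
lemma sum_chi_zero (p : (Fin m → ZMod 2) → Prop) [DecidablePred p]
    (φ : (Fin m → ZMod 2) → ZMod 2)
    (hp : ∀ a b, p a → p b → p (a + b))
    (hφ : ∀ a b, φ (a + b) = φ a + φ b)
    (a₀ : Fin m → ZMod 2) (h₀ : p a₀) (h₁ : φ a₀ ≠ 0) :
    ∑ v ∈ univ.filter p, χ (φ v) = 0 := by
  have hmem : ∀ v, v ∈ univ.filter p ↔ v + a₀ ∈ univ.filter p := by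
    intro v
    simp only [Finset.mem_filter, Finset.mem_univ, true_and]
    constructor
    · exact fun h => hp _ _ h h₀
    · intro h
      have := hp _ _ h h₀
      rwa [add_assoc, pi_add_self, add_zero] at this
  have key : ∑ v ∈ univ.filter p, χ (φ v) = ∑ v ∈ univ.filter p, χ (φ (v + a₀)) := by
    refine Finset.sum_nbij' (fun v => v + a₀) (fun v => v + a₀) ?_ ?_ ?_ ?_ ?_
    · intro a ha; exact (hmem a).mp ha
    · intro a ha; exact (hmem a).mp ha
    · intro a _; show a + a₀ + a₀ = a; rw [add_assoc, pi_add_self, add_zero]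
    · intro a _; show a + a₀ + a₀ = a; rw [add_assoc, pi_add_self, add_zero]
    · intro a _
      show χ (φ a) = χ (φ (a + a₀ + a₀))
      rw [add_assoc, pi_add_self, add_zero]
  have hφa : φ a₀ = 1 := zmod2_ne_zero _ h₁
  have key2 : ∀ v, χ (φ (v + a₀)) = - χ (φ v) := by
    intro v
    rw [hφ, χ_add, hφa, χ_one]
    ring
  rw [Finset.sum_congr rfl (fun v _ => key2 v), Finset.sum_neg_distrib] at key
  linear_combination (1/2 : ℂ) * key

section Graph

variable {y : Fin m → ZMod 2} {B : Submodule (ZMod 2) (Fin m → ZMod 2)}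
  {G : SimpleGraph (Fin m)}

lemma reach_const
    (hG : ∀ i j, G.Adj i j ↔ i ≠ j ∧ (Pi.single i (1 : ZMod 2) + Pi.single j 1) ∈ B)
    (w : Fin m → ZMod 2) (hw : ∀ v ∈ B, w ⬝ᵥ v = 0)
    {i j : Fin m} (h : G.Reachable i j) : w j = w i := by
  obtain ⟨p⟩ := h
  induction p with
  | nil => rfl
  | cons hadj p ih =>
    rename_i a b c
    have hmem := ((hG a b).mp hadj).2
    have h0 := hw _ hmem
    rw [dotProduct_add, dotProduct_single, dotProduct_single, mul_one, mul_one] at h0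
    rw [ih]
    exact zmod2_eq_of_add_eq_zero _ _ h0

lemma comb_key
    (hG : ∀ i j, G.Adj i j ↔ i ≠ j ∧ (Pi.single i (1 : ZMod 2) + Pi.single j 1) ∈ B)
    (hcomp : ∀ i : Fin m,
      Even ({j | G.Reachable i j}.ncard) ∧
      2 * ({j | G.Reachable i j ∧ y j ≠ 0}.ncard) = {j | G.Reachable i j}.ncard)
    (w : Fin m → ZMod 2) (hw : ∀ v ∈ B, w ⬝ᵥ v = 0) :
    2 * hammingNorm (y + w) = m := by
  classical
  haveI : Fintype G.ConnectedComponent := Fintype.ofFinite _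
  have hham : hammingNorm (y + w) = (univ.filter (fun j => ¬ (y j + w j) = 0)).card := rfl
  have hdec1 : (univ.filter (fun j => ¬ (y j + w j) = 0)).card
      = ∑ b : G.ConnectedComponent,
          ((univ.filter (fun j => ¬ (y j + w j) = 0)).filter
            (fun j => G.connectedComponentMk j = b)).card := by
    exact Finset.card_eq_sum_card_fiberwise (fun j _ => Finset.mem_univ _)
  have hdec2 : m = ∑ b : G.ConnectedComponent,
      ((univ : Finset (Fin m)).filter (fun j => G.connectedComponentMk j = b)).card := by
    have := Finset.card_eq_sum_card_fiberwise
      (s := (univ : Finset (Fin m))) (t := (univ : Finset G.ConnectedComponent))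
      (f := G.connectedComponentMk) (fun j _ => Finset.mem_univ _)
    simpa using this
  rw [hham, hdec1, Finset.mul_sum]
  conv_rhs => rw [hdec2]
  refine Finset.sum_congr rfl (fun b _ => ?_)
  obtain ⟨i, rfl⟩ := b.exists_rep
  have hb : Quot.mk G.Reachable i = G.connectedComponentMk i := rfl
  rw [hb]
  have hfiber : ∀ j, G.connectedComponentMk j = G.connectedComponentMk i ↔ G.Reachable i j := by
    intro j
    rw [SimpleGraph.ConnectedComponent.eq]
    exact ⟨fun h => h.symm, fun h => h.symm⟩
  have hset : {j | G.Reachable i j} = ↑(univ.filter (fun j => G.Reachable i j)) := by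
    ext j; simp
  have hset2 : {j | G.Reachable i j ∧ y j ≠ 0}
      = ↑(univ.filter (fun j => G.Reachable i j ∧ y j ≠ 0)) := by
    ext j; simp
  have hc := (hcomp i).2
  rw [hset, hset2, Set.ncard_coe_finset, Set.ncard_coe_finset] at hc
  have hfe : (univ.filter (fun j => G.connectedComponentMk j = G.connectedComponentMk i))
      = univ.filter (fun j => G.Reachable i j) := by
    apply Finset.filter_congr; intro j _; simp [hfiber j]
  rw [Finset.filter_filter, hfe]
  rcases zmod2_cases (w i) with hwi | hwi
  · have : (univ.filter (fun j => ¬ (y j + w j) = 0 ∧ G.connectedComponentMk j = G.connectedComponentMk i))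
        = univ.filter (fun j => G.Reachable i j ∧ y j ≠ 0) := by
      apply Finset.filter_congr; intro j _
      simp only [hfiber j]
      constructor
      · rintro ⟨h1, h2⟩
        refine ⟨h2, ?_⟩
        rw [reach_const hG w hw h2, hwi, add_zero] at h1
        exact h1
      · rintro ⟨h2, h1⟩
        refine ⟨?_, h2⟩
        rw [reach_const hG w hw h2, hwi, add_zero]
        exact h1
    rw [this, hc]
  · have heq : (univ.filter (fun j => ¬ (y j + w j) = 0 ∧ G.connectedComponentMk j = G.connectedComponentMk i))
        = univ.filter (fun j => G.Reachable i j ∧ ¬ (y j ≠ 0)) := by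
      apply Finset.filter_congr; intro j _
      simp only [hfiber j]
      have hval : ∀ (a : ZMod 2), ¬ (a + 1) = 0 ↔ ¬ (a ≠ 0) := by decide
      constructor
      · rintro ⟨h1, h2⟩
        rw [reach_const hG w hw h2, hwi] at h1
        exact ⟨h2, (hval _).mp h1⟩
      · rintro ⟨h2, h1⟩
        rw [reach_const hG w hw h2, hwi]
        exact ⟨(hval _).mpr h1, h2⟩
    have hsplit := Finset.card_filter_add_card_filter_not
      (s := univ.filter (fun j => G.Reachable i j)) (p := fun j => y j ≠ 0)
    rw [Finset.filter_filter, Finset.filter_filter] at hsplit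
    rw [heq]
    omega

end Graph

/-- The linear functional `v ↦ w ⬝ᵥ v`. -/
noncomputable def dotL (w : Fin m → ZMod 2) :
    Module.Dual (ZMod 2) (Fin m → ZMod 2) where
  toFun v := w ⬝ᵥ v
  map_add' a b := dotProduct_add w a b
  map_smul' r a := by
    simp [dotProduct, Finset.mul_sum, Pi.smul_apply, smul_eq_mul]
    ring_nf
    exact Finset.sum_congr rfl fun j _ => by ring

lemma dot_repr (φ : Module.Dual (ZMod 2) (Fin m → ZMod 2)) (v : Fin m → ZMod 2) :
    (fun j => φ (Pi.single j 1)) ⬝ᵥ v = φ v := by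
  conv_rhs => rw [← Finset.univ_sum_single v]
  rw [map_sum]
  rw [show (fun j => φ (Pi.single j 1)) ⬝ᵥ v = ∑ j, φ (Pi.single j 1) * v j from rfl]
  refine Finset.sum_congr rfl (fun j _ => ?_)
  have : Pi.single j (v j) = v j • (Pi.single j (1 : ZMod 2) : Fin m → ZMod 2) := by
    ext k
    by_cases hk : k = j <;> simp [Pi.single_apply, hk]
  rw [this, LinearMap.map_smul, smul_eq_mul, mul_comm]

/-- The set `K = {w | ∀ v ∈ B, w ⬝ᵥ v = 0}` is equivalent to the dual annihilator of `B`. -/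
noncomputable def dualEquiv (B : Submodule (ZMod 2) (Fin m → ZMod 2)) :
    {w : Fin m → ZMod 2 // ∀ v ∈ B, w ⬝ᵥ v = 0} ≃ B.dualAnnihilator where
  toFun w := ⟨dotL w.1, (Submodule.mem_dualAnnihilator _).mpr w.2⟩
  invFun φ := ⟨fun j => φ.1 (Pi.single j 1), fun v hv => by
    rw [dot_repr]
    exact (Submodule.mem_dualAnnihilator _).mp φ.2 v hv⟩
  left_inv w := by
    ext j
    show w.1 ⬝ᵥ Pi.single j 1 = w.1 j
    rw [dotProduct_single, mul_one]
  right_inv φ := by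
    apply Subtype.ext
    apply LinearMap.ext
    intro v
    exact dot_repr φ.1 v

lemma card_filter_nat_card {α : Type*} [Fintype α] (p : α → Prop) [DecidablePred p] :
    (univ.filter p).card = Nat.card {x // p x} := by
  rw [Nat.card_eq_fintype_card, Fintype.card_subtype]

lemma card_mul_card (B : Submodule (ZMod 2) (Fin m → ZMod 2))
    [DecidablePred (fun v : Fin m → ZMod 2 => v ∈ B)]
    [DecidablePred (fun w : Fin m → ZMod 2 => ∀ v ∈ B, w ⬝ᵥ v = 0)] :
    (univ.filter (fun v => v ∈ B)).card *
      (univ.filter (fun w : Fin m → ZMod 2 => ∀ v ∈ B, w ⬝ᵥ v = 0)).card = 2 ^ m := by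
  rw [card_filter_nat_card, card_filter_nat_card]
  have h1 : Nat.card {w : Fin m → ZMod 2 // ∀ v ∈ B, w ⬝ᵥ v = 0}
      = Nat.card B.dualAnnihilator := Nat.card_congr (dualEquiv B)
  have h2 : Nat.card B.dualAnnihilator = Nat.card ((Fin m → ZMod 2) ⧸ B) :=
    (Nat.card_congr (Subspace.quotEquivAnnihilator B).toEquiv).symm
  rw [h1, h2, mul_comm, ← mul_comm (Nat.card ↥B), ← Submodule.card_eq_card_quotient_mul_card]
  rw [Nat.card_eq_fintype_card]
  simp [ZMod.card]

lemma separation (B : Submodule (ZMod 2) (Fin m → ZMod 2)) (ω : Fin m → ZMod 2)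
    (hω : ω ∉ B) : ∃ w : Fin m → ZMod 2, (∀ v ∈ B, w ⬝ᵥ v = 0) ∧ w ⬝ᵥ ω ≠ 0 := by
  by_contra hcon
  push_neg at hcon
  apply hω
  rw [← Subspace.forall_mem_dualAnnihilator_apply_eq_zero_iff B ω]
  intro φ hφ
  have hmem := (Submodule.mem_dualAnnihilator _).mp hφ
  have := hcon (fun j => φ (Pi.single j 1)) (fun v hv => by rw [dot_repr]; exact hmem v hv)
  rwa [dot_repr] at this

end BalancedAux

open scoped Classical in
/-- sufficiency direction of Theorem 8, in coding-theoretic form.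
Let `B ⊆ F₂^m` be a binary linear code with all codeword weights even, `ε_v = (−1)^{y·v}`
(extended to all of `F₂^m`), and let `G` be the graph on `{1,…,m}` with `i ~ j` iff `i ≠ j`
and `e_i + e_j ∈ B`. If every connected component of `G` has even size `N_k` (in particular
no isolated vertices) and `w_H(y|_{Γ_k}) = N_k/2` for each `k`, then for every `l ≥ 3`:
(a) `Σ_{v∈B} ε_v (i tan(2π/2^l))^{w_H(v)} = (sec(2π/2^l))^m`, and
(b) `Σ_{v∈B} ε_v (i tan(2π/2^l))^{w_H(v+ω)} = 0` for every `ω ∈ F₂^m ∖ B`. -/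
theorem balanced_components_sufficient (m : ℕ) (hm : 1 ≤ m) (y : Fin m → ZMod 2)
    (B : Submodule (ZMod 2) (Fin m → ZMod 2))
    (hev : ∀ v ∈ B, Even (hammingNorm v))
    (G : SimpleGraph (Fin m))
    (hG : ∀ i j, G.Adj i j ↔ i ≠ j ∧ (Pi.single i (1 : ZMod 2) + Pi.single j 1) ∈ B)
    (hcomp : ∀ i : Fin m,
      Even ({j | G.Reachable i j}.ncard) ∧
      2 * ({j | G.Reachable i j ∧ y j ≠ 0}.ncard) = {j | G.Reachable i j}.ncard) :
    ∀ l : ℕ, 3 ≤ l →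
      (∑ v ∈ Finset.univ.filter (fun v : Fin m → ZMod 2 => v ∈ B),
          (-1 : ℂ) ^ (y ⬝ᵥ v).val *
            (Complex.I * Real.tan (2 * Real.pi / 2 ^ l)) ^ hammingNorm v
        = ((Real.cos (2 * Real.pi / 2 ^ l) : ℂ))⁻¹ ^ m) ∧
      (∀ ω : Fin m → ZMod 2, ω ∉ B →
        ∑ v ∈ Finset.univ.filter (fun v : Fin m → ZMod 2 => v ∈ B),
            (-1 : ℂ) ^ (y ⬝ᵥ v).val *
              (Complex.I * Real.tan (2 * Real.pi / 2 ^ l)) ^ hammingNorm (v + ω)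
          = 0) := by
  intro l hl
  open BalancedAux in
  set θ : ℝ := 2 * Real.pi / 2 ^ l with hθdef
  have hcospos : 0 < Real.cos θ := by
    apply Real.cos_pos_of_mem_Ioo
    constructor
    · have h0 : (0:ℝ) < θ := by rw [hθdef]; positivity
      have := Real.pi_pos
      linarith
    · have h8 : (8:ℝ) ≤ 2 ^ l := by
        calc (8:ℝ) = 2 ^ 3 := by norm_num
        _ ≤ 2 ^ l := by
          apply pow_le_pow_right₀ (by norm_num) hl
      have hle : θ ≤ 2 * Real.pi / 8 := by
        rw [hθdef]
        gcongr
      have := Real.pi_pos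
      linarith
  have hcos : Real.cos θ ≠ 0 := ne_of_gt hcospos
  have hcosC : ((Real.cos θ : ℂ)) ≠ 0 := Complex.ofReal_ne_zero.mpr hcos
  have hcosCm : ((Real.cos θ : ℂ)) ^ m ≠ 0 := pow_ne_zero _ hcosC
  set F := Finset.univ.filter (fun v : Fin m → ZMod 2 => v ∈ B) with hF
  set X := Finset.univ.filter
    (fun x : Fin m → ZMod 2 => ∀ v ∈ B, (y + x) ⬝ᵥ v = 0) with hX
  set Kf := Finset.univ.filter
    (fun w : Fin m → ZMod 2 => ∀ v ∈ B, w ⬝ᵥ v = 0) with hKf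
  -- the key identity
  have key : ∀ ω : Fin m → ZMod 2,
      ((Real.cos θ : ℂ)) ^ m * (∑ v ∈ F,
          (-1:ℂ) ^ (y ⬝ᵥ v).val * (Complex.I * (Real.tan θ : ℂ)) ^ hammingNorm (v + ω))
      = (F.card : ℂ) * (∑ x ∈ X, BalancedAux.χ (x ⬝ᵥ ω)) / 2 ^ m := by
    intro ω
    rw [Finset.mul_sum]
    have e1 : ∀ v, ((Real.cos θ:ℂ))^m * ((-1:ℂ)^(y ⬝ᵥ v).val *
        (Complex.I * (Real.tan θ:ℂ)) ^ hammingNorm (v+ω))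
        = ∑ x : Fin m → ZMod 2,
            BalancedAux.χ (y ⬝ᵥ v) * (BalancedAux.χ (x ⬝ᵥ (v+ω)) * BalancedAux.E θ m x / 2^m) := by
      intro v
      rw [← Finset.mul_sum, ← BalancedAux.expand θ hcos (v+ω)]
      rw [show ((-1:ℂ)^(y ⬝ᵥ v).val) = BalancedAux.χ (y ⬝ᵥ v) from rfl]
      ring
    rw [Finset.sum_congr rfl (fun v _ => e1 v), Finset.sum_comm]
    -- rearrange each term
    have e2 : ∀ x v, BalancedAux.χ (y ⬝ᵥ v) * (BalancedAux.χ (x ⬝ᵥ (v+ω)) * BalancedAux.E θ m x / 2^m)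
        = (BalancedAux.E θ m x / 2^m * BalancedAux.χ (x ⬝ᵥ ω)) * BalancedAux.χ ((y+x) ⬝ᵥ v) := by
      intro x v
      rw [dotProduct_add x v ω, BalancedAux.χ_add, add_dotProduct y x v, BalancedAux.χ_add]
      ring
    rw [Finset.sum_congr rfl (fun x _ =>
      Finset.sum_congr rfl (fun v _ => e2 x v))]
    have e2' : ∀ x : Fin m → ZMod 2, ∑ v ∈ F,
        (BalancedAux.E θ m x / 2^m * BalancedAux.χ (x ⬝ᵥ ω)) * BalancedAux.χ ((y+x) ⬝ᵥ v)
        = (BalancedAux.E θ m x / 2^m * BalancedAux.χ (x ⬝ᵥ ω)) *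
            ∑ v ∈ F, BalancedAux.χ ((y+x) ⬝ᵥ v) := by
      intro x; rw [Finset.mul_sum]
    rw [Finset.sum_congr rfl (fun x _ => e2' x)]
    -- the inner sum vanishes off X
    have hvanish : ∀ x ∈ (univ : Finset (Fin m → ZMod 2)), x ∉ X →
        (BalancedAux.E θ m x / 2^m * BalancedAux.χ (x ⬝ᵥ ω)) *
          ∑ v ∈ F, BalancedAux.χ ((y+x) ⬝ᵥ v) = 0 := by
      intro x _ hx
      rw [hX, Finset.mem_filter] at hx
      push_neg at hx
      obtain ⟨v₀, hv₀, hne⟩ := hx (Finset.mem_univ x)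
      rw [hF]
      rw [BalancedAux.sum_chi_zero (fun v => v ∈ B) (fun v => (y+x) ⬝ᵥ v)
        (fun a b ha hb => B.add_mem ha hb) (fun a b => dotProduct_add _ a b) v₀ hv₀ hne,
        mul_zero]
    rw [← Finset.sum_subset (Finset.subset_univ X) hvanish]
    -- on X the inner sum is the cardinality and E is 1
    have hpt : ∀ x ∈ X, (BalancedAux.E θ m x / 2^m * BalancedAux.χ (x ⬝ᵥ ω)) *
        ∑ v ∈ F, BalancedAux.χ ((y+x) ⬝ᵥ v)
        = (F.card : ℂ) * BalancedAux.χ (x ⬝ᵥ ω) / 2 ^ m := by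
      intro x hx
      rw [hX, Finset.mem_filter] at hx
      have hcond := hx.2
      have hsum1 : ∑ v ∈ F, BalancedAux.χ ((y+x) ⬝ᵥ v) = (F.card : ℂ) := by
        rw [Finset.sum_congr rfl (fun v hv => by
          rw [hcond v (by rw [hF] at hv; exact (Finset.mem_filter.mp hv).2), BalancedAux.χ_zero])]
        simp
      have hhn : 2 * hammingNorm x = m := by
        have := BalancedAux.comb_key hG hcomp (y + x) hcond
        rwa [BalancedAux.pi_add_cancel] at this
      have hE1 : BalancedAux.E θ m x = 1 := by
        rw [BalancedAux.E, show m - hammingNorm x = hammingNorm x by omega,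
          ← mul_pow, ← Complex.exp_add]
        rw [add_neg_cancel, Complex.exp_zero, one_pow]
      rw [hsum1, hE1]
      ring
    rw [Finset.sum_congr rfl hpt]
    rw [← Finset.sum_div, ← Finset.mul_sum]
  constructor
  · -- part (a)
    have h0 := key 0
    simp only [add_zero] at h0
    have hs1 : ∑ x ∈ X, BalancedAux.χ (x ⬝ᵥ (0 : Fin m → ZMod 2)) = (X.card : ℂ) := by
      rw [Finset.sum_congr rfl (fun x _ => by rw [dotProduct_zero, BalancedAux.χ_zero])]
      simp
    rw [hs1] at h0
    have hXK : X.card = Kf.card := by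
      rw [hX, hKf]
      refine Finset.card_bij' (fun x _ => y + x) (fun w _ => y + w) ?_ ?_ ?_ ?_
      · intro x hx
        rw [Finset.mem_filter] at hx ⊢
        exact ⟨Finset.mem_univ _, hx.2⟩
      · intro w hw
        rw [Finset.mem_filter] at hw ⊢
        refine ⟨Finset.mem_univ _, fun v hv => ?_⟩
        rw [BalancedAux.pi_add_cancel]
        exact hw.2 v hv
      · intro x _; exact BalancedAux.pi_add_cancel y x
      · intro w _; exact BalancedAux.pi_add_cancel y w
    have hcard : F.card * Kf.card = 2 ^ m := by
      rw [hF, hKf]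
      exact BalancedAux.card_mul_card B
    have hone : (F.card : ℂ) * (X.card : ℂ) / 2 ^ m = 1 := by
      rw [hXK, ← Nat.cast_mul, hcard]
      rw [Nat.cast_pow, Nat.cast_ofNat]
      exact div_self (pow_ne_zero _ two_ne_zero)
    rw [hone] at h0
    rw [inv_pow]
    exact eq_inv_of_mul_eq_one_left (by rw [mul_comm]; exact h0)
  · -- part (b)
    intro ω hω
    obtain ⟨w₀, hw₀K, hw₀ω⟩ := BalancedAux.separation B ω hω
    have hsum : ∑ x ∈ X, BalancedAux.χ (x ⬝ᵥ ω) = 0 := by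
      have hre : ∑ x ∈ X, BalancedAux.χ (x ⬝ᵥ ω)
          = ∑ w ∈ Kf, BalancedAux.χ ((y + w) ⬝ᵥ ω) := by
        rw [hX, hKf]
        refine Finset.sum_nbij' (fun x => y + x) (fun w => y + w) ?_ ?_ ?_ ?_ ?_
        · intro x hx
          rw [Finset.mem_filter] at hx ⊢
          exact ⟨Finset.mem_univ _, hx.2⟩
        · intro w hw
          rw [Finset.mem_filter] at hw ⊢
          refine ⟨Finset.mem_univ _, fun v hv => ?_⟩
          rw [BalancedAux.pi_add_cancel]
          exact hw.2 v hv
        · intro x _; exact BalancedAux.pi_add_cancel y x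
        · intro w _; exact BalancedAux.pi_add_cancel y w
        · intro x _
          rw [BalancedAux.pi_add_cancel]
      rw [hre]
      have hfac : ∀ w : Fin m → ZMod 2, BalancedAux.χ ((y+w) ⬝ᵥ ω)
          = BalancedAux.χ (y ⬝ᵥ ω) * BalancedAux.χ (w ⬝ᵥ ω) := by
        intro w; rw [add_dotProduct, BalancedAux.χ_add]
      rw [Finset.sum_congr rfl (fun w _ => hfac w), ← Finset.mul_sum, hKf]
      rw [BalancedAux.sum_chi_zero (fun w : Fin m → ZMod 2 => ∀ v ∈ B, w ⬝ᵥ v = 0)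
        (fun w => w ⬝ᵥ ω)
        (fun a b ha hb v hv => by rw [add_dotProduct, ha v hv, hb v hv, add_zero])
        (fun a b => add_dotProduct a b ω) w₀ hw₀K hw₀ω, mul_zero]
    have h0 := key ω
    rw [hsum, mul_zero, zero_div] at h0
    exact (mul_eq_zero.mp h0).resolve_left hcosCm
end

section
/- Let n ≥ 1 and let Γ₁, …, Γ_t ⊆ {1,…,n} be pairwise disjoint nonempty sets with union Γ. Let y ∈ F₂ⁿ satisfy 2·w_H(y|_{Γ_k}) = |Γ_k| for every k. Let C₂ ⊆ F₂ⁿ be a binary linear code such that every x ∈ C₂ vanishes outside Γ and is constant on each Γ_k (x|_{Γ_k} is all-zeros or all-ones), and let w ∈ F₂ⁿ be constant on each Γ_k. Then for every x ∈ C₂, w_H(w + x + y) = w_H((w + y)|_{{1,…,n}∖Γ}) + |Γ|/2; in particular w_H(w + x + y) is independent of x ∈ C₂, so the corresponding CSS code is a constant excitation code. If moreover w vanishes outside Γ, then w_H(w + x + y) = |Γ|/2 + w_H(y|_{{1,…,n}∖Γ}), which is independent of both w and x; hence for an error-detecting code the (constant) weights in different cosets of the X-stabilizers are identical. -/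
open Finset

/-- On a set where `z` is constant (0 or 1) and `y` is balanced, the count of nonzero
coordinates of `z + y` is half the size of the set. -/
lemma half_card_aux {n : ℕ} (s : Finset (Fin n)) (y z : Fin n → ZMod 2)
    (hy : 2 * (s.filter fun i => y i ≠ 0).card = s.card)
    (hz : (∀ i ∈ s, z i = 0) ∨ (∀ i ∈ s, z i = 1)) :
    (s.filter fun i => z i + y i ≠ 0).card = s.card / 2 := by
  have hsplit := Finset.card_filter_add_card_filter_not
    (s := s) (p := fun i => y i ≠ 0)
  rcases hz with h | h
  · have heq : (s.filter fun i => z i + y i ≠ 0) = s.filter fun i => y i ≠ 0 := by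
      apply Finset.filter_congr
      intro i hi
      rw [h i hi, zero_add]
    rw [heq]; omega
  · have key : ∀ a : ZMod 2, (1 + a ≠ 0 ↔ ¬ a ≠ 0) := by decide
    have heq : (s.filter fun i => z i + y i ≠ 0) = s.filter fun i => ¬ y i ≠ 0 := by
      apply Finset.filter_congr
      intro i hi
      rw [h i hi]
      exact key (y i)
    rw [heq]; omega

/-- Corollary 9 of the paper, combinatorial form. Let `Γ₁, …, Γ_t` be
pairwise disjoint nonempty subsets of `{1,…,n}` with union `Γ`, let `y` be balanced on each
`Γ_k` (`2·w_H(y|_{Γ_k}) = |Γ_k|`), let every `x ∈ C₂` vanish outside `Γ` and be constant on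
each `Γ_k`, and let `w` be constant on each `Γ_k`. Then for every `x ∈ C₂`,
`w_H(w + x + y) = w_H((w + y)|_{Γᶜ}) + |Γ|/2`, independent of `x` (so the CSS code is a
constant excitation code); and if moreover `w` vanishes outside `Γ`, then
`w_H(w + x + y) = |Γ|/2 + w_H(y|_{Γᶜ})`, independent of both `w` and `x`. -/
theorem constant_excitation_weights (n t : ℕ) (hn : 1 ≤ n)
    (Γk : Fin t → Finset (Fin n))
    (hdisj : ∀ k k', k ≠ k' → Disjoint (Γk k) (Γk k'))
    (hne : ∀ k, (Γk k).Nonempty)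
    (Γ : Finset (Fin n)) (hΓ : Γ = Finset.univ.biUnion Γk)
    (y : Fin n → ZMod 2)
    (hy : ∀ k, 2 * ((Γk k).filter fun i => y i ≠ 0).card = (Γk k).card)
    (C₂ : Submodule (ZMod 2) (Fin n → ZMod 2))
    (hC₂ : ∀ x ∈ C₂, (∀ i, i ∉ Γ → x i = 0) ∧
      ∀ k, (∀ i ∈ Γk k, x i = 0) ∨ (∀ i ∈ Γk k, x i = 1))
    (w : Fin n → ZMod 2)
    (hw : ∀ k, (∀ i ∈ Γk k, w i = 0) ∨ (∀ i ∈ Γk k, w i = 1)) :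
    (∀ x ∈ C₂, hammingNorm (w + x + y)
      = (Finset.univ.filter fun i => i ∉ Γ ∧ (w + y) i ≠ 0).card + Γ.card / 2) ∧
    ((∀ i, i ∉ Γ → w i = 0) → ∀ x ∈ C₂, hammingNorm (w + x + y)
      = Γ.card / 2 + (Finset.univ.filter fun i => i ∉ Γ ∧ y i ≠ 0).card) := by
  -- cardinality of Γ as a sum
  have hΓcard : Γ.card = ∑ k, (Γk k).card := by
    rw [hΓ]
    exact Finset.card_biUnion (fun k _ k' _ h => hdisj k k' h)
  have hΓhalf : Γ.card / 2 = ∑ k, (Γk k).card / 2 := by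
    have h2 : 2 * ∑ k, (Γk k).card / 2 = ∑ k, (Γk k).card := by
      rw [Finset.mul_sum]
      apply Finset.sum_congr rfl
      intro k _
      have := hy k
      omega
    omega
  have main : ∀ x ∈ C₂, hammingNorm (w + x + y)
      = (Finset.univ.filter fun i => i ∉ Γ ∧ (w + y) i ≠ 0).card + Γ.card / 2 := by
    intro x hx
    have hnorm : hammingNorm (w + x + y)
        = (Finset.univ.filter fun i => (w + x + y) i ≠ 0).card := rfl
    have hsplit := Finset.card_filter_add_card_filter_not
      (s := Finset.univ.filter fun i => (w + x + y) i ≠ 0) (p := fun i => i ∈ Γ)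
    rw [Finset.filter_filter, Finset.filter_filter] at hsplit
    -- the inside part
    have hin : (Finset.univ.filter fun i => (w + x + y) i ≠ 0 ∧ i ∈ Γ).card
        = Γ.card / 2 := by
      have : (Finset.univ.filter fun i => (w + x + y) i ≠ 0 ∧ i ∈ Γ)
          = Γ.filter fun i => (w + x + y) i ≠ 0 := by
        ext i
        simp [and_comm]
      rw [this, hΓhalf, hΓ, Finset.filter_biUnion]
      rw [Finset.card_biUnion]
      · apply Finset.sum_congr rfl
        intro k _
        have hconst : (∀ i ∈ Γk k, (w + x) i = 0) ∨ (∀ i ∈ Γk k, (w + x) i = 1) := by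
          rcases hw k with h1 | h1 <;> rcases (hC₂ x hx).2 k with h2 | h2
          · left; intro i hi; simp [Pi.add_apply, h1 i hi, h2 i hi]
          · right; intro i hi; simp [Pi.add_apply, h1 i hi, h2 i hi]
          · right; intro i hi; simp [Pi.add_apply, h1 i hi, h2 i hi]
          · left; intro i hi; simp [Pi.add_apply, h1 i hi, h2 i hi]; decide
        have := half_card_aux (Γk k) y (w + x) (hy k) hconst
        simpa [Pi.add_apply, add_assoc] using this
      · intro k _ k' _ h
        exact Finset.disjoint_filter_filter (hdisj k k' h)
    have hout : (Finset.univ.filter fun i => (w + x + y) i ≠ 0 ∧ ¬ i ∈ Γ)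
        = (Finset.univ.filter fun i => i ∉ Γ ∧ (w + y) i ≠ 0) := by
      ext i
      simp only [Finset.mem_filter, Finset.mem_univ, true_and, Pi.add_apply]
      constructor
      · rintro ⟨hne', hni⟩
        refine ⟨hni, ?_⟩
        rwa [(hC₂ x hx).1 i hni, add_zero] at hne'
      · rintro ⟨hni, hne'⟩
        refine ⟨?_, hni⟩
        rwa [(hC₂ x hx).1 i hni, add_zero]
    rw [hnorm, ← hsplit, hin, hout]
    omega
  refine ⟨main, ?_⟩
  intro hw0 x hx
  rw [main x hx]
  have : (Finset.univ.filter fun i => i ∉ Γ ∧ (w + y) i ≠ 0)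
      = (Finset.univ.filter fun i => i ∉ Γ ∧ y i ≠ 0) := by
    ext i
    simp only [Finset.mem_filter, Finset.mem_univ, true_and, Pi.add_apply]
    constructor
    · rintro ⟨hni, hne'⟩
      exact ⟨hni, by rwa [hw0 i hni, zero_add] at hne'⟩
    · rintro ⟨hni, hne'⟩
      exact ⟨hni, by rwa [hw0 i hni, zero_add]⟩
  rw [this]
  omega
end

section
/- Let A₂ ⊊ A₁ ⊆ F₂^t be binary linear codes and let M ≥ 2 be an even integer. Define C₂ = {a ⊗ 1_M : a ∈ A₂} ⊆ F₂^{tM} and C_Z = {(b ⊗ e₁) + w : b ∈ A₁^⊥, w ∈ W^{(1)} + ⋯ + W^{(t)}} ⊆ F₂^{tM}. Then: (a) every vector of C₂ is orthogonal to every vector of C_Z, so (C₂, C_Z) defines a CSS code on tM qubits; (b) dim C₂ = dim A₂ and dim C_Z = (t − dim A₁) + t(M − 1), so the CSS code encodes tM − dim C₂ − dim C_Z = dim A₁ − dim A₂ logical qubits; (c) C_Z^⊥ = {f ⊗ 1_M : f ∈ A₁}, every v ∈ C_Z^⊥ ∖ C₂ has w_H(v) ≥ M·d_min(A₁), and every z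 ∈ C₂^⊥ ∖ C_Z has w_H(z) ≥ d_min(A₂^⊥); hence the minimum distance of the CSS code is at least min(M·d_min(A₁), d_min(A₂^⊥)). -/
set_option linter.unusedSectionVars false
open Matrix Finset Module

namespace CSSAux

/- ## dual code machinery -/
variable {n : Type*} [Fintype n] [DecidableEq n]

def dualCode (S : Submodule (ZMod 2) (n → ZMod 2)) : Submodule (ZMod 2) (n → ZMod 2) where
  carrier := {b | ∀ v ∈ S, b ⬝ᵥ v = 0}
  add_mem' := by intro a b ha hb; intro v hv; simp [add_dotProduct, ha v hv, hb v hv]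
  zero_mem' := by intro v hv; simp
  smul_mem' := by intro c a ha v hv; simp [smul_dotProduct, ha v hv]

lemma mem_dualCode {S : Submodule (ZMod 2) (n → ZMod 2)} {b : n → ZMod 2} :
    b ∈ dualCode S ↔ ∀ v ∈ S, b ⬝ᵥ v = 0 := Iff.rfl

noncomputable def eDual (n : Type*) [Fintype n] [DecidableEq n] :
    (n → ZMod 2) ≃ₗ[ZMod 2] Module.Dual (ZMod 2) (n → ZMod 2) :=
  (Pi.basisFun (ZMod 2) n).toDualEquiv

lemma eDual_apply (b v : n → ZMod 2) : eDual n b v = b ⬝ᵥ v := by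
  rw [eDual, Basis.toDualEquiv_apply]
  conv_lhs => rw [← (Pi.basisFun (ZMod 2) n).sum_repr v]
  rw [map_sum]
  have h : ∀ x, ((Pi.basisFun (ZMod 2) n).toDual b) (Pi.single x 1) = b x := by
    intro x
    have := (Pi.basisFun (ZMod 2) n).toDual_apply_left b x
    simpa using this
  simp [h, Pi.basisFun_repr, dotProduct, mul_comm]

lemma dualCode_eq_comap (S : Submodule (ZMod 2) (n → ZMod 2)) :
    dualCode S = S.dualAnnihilator.comap (eDual n).toLinearMap := by
  ext b
  simp only [mem_dualCode, Submodule.mem_comap, LinearEquiv.coe_coe,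
    Submodule.mem_dualAnnihilator, eDual_apply]

lemma finrank_dualCode (S : Submodule (ZMod 2) (n → ZMod 2)) :
    finrank (ZMod 2) (dualCode S) = Fintype.card n - finrank (ZMod 2) S := by
  rw [dualCode_eq_comap, Submodule.comap_equiv_eq_map_symm]
  rw [LinearEquiv.finrank_map_eq]
  have h1 := LinearEquiv.finrank_eq (R := ZMod 2) (M := (n → ZMod 2) ⧸ S)
    (N := S.dualAnnihilator) (Subspace.quotEquivAnnihilator S)
  have h2 := Submodule.finrank_quotient_add_finrank S
  have h3 : finrank (ZMod 2) (n → ZMod 2) = Fintype.card n := by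
    simp [Module.finrank_pi]
  omega

lemma le_dualCode_dualCode (S : Submodule (ZMod 2) (n → ZMod 2)) :
    S ≤ dualCode (dualCode S) := by
  intro v hv b hb
  rw [dotProduct_comm]
  exact hb v hv

lemma dualCode_dualCode (S : Submodule (ZMod 2) (n → ZMod 2)) :
    dualCode (dualCode S) = S := by
  refine (Submodule.eq_of_le_of_finrank_le (le_dualCode_dualCode S) ?_).symm
  rw [finrank_dualCode, finrank_dualCode]
  have h := Submodule.finrank_le S
  simp only [Module.finrank_pi] at h ⊢
  omega

/- ## block maps -/
variable (t M : ℕ)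

def blockSum : (Fin t × Fin M → ZMod 2) →ₗ[ZMod 2] (Fin t → ZMod 2) where
  toFun z := fun k => ∑ j, z (k, j)
  map_add' := by intro x y; funext k; simp [Finset.sum_add_distrib]
  map_smul' := by intro c x; funext k; simp [Finset.mul_sum]

@[simp] lemma blockSum_apply (z : Fin t × Fin M → ZMod 2) (k : Fin t) :
    blockSum t M z k = ∑ j, z (k, j) := rfl

def embFst : (Fin t → ZMod 2) →ₗ[ZMod 2] (Fin t × Fin M → ZMod 2) where
  toFun a := fun p => a p.1
  map_add' := by intro x y; rfl
  map_smul' := by intro c x; rfl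

@[simp] lemma embFst_apply (a : Fin t → ZMod 2) :
    embFst t M a = fun p : Fin t × Fin M => a p.1 := rfl

def epsMap : (Fin t → ZMod 2) →ₗ[ZMod 2] (Fin t × Fin M → ZMod 2) where
  toFun b := fun p => b p.1 * (if (p.2 : ℕ) = 0 then 1 else 0)
  map_add' := by intro x y; funext p; by_cases h : (p.2 : ℕ) = 0 <;> simp [h, add_mul]
  map_smul' := by intro c x; funext p; simp [mul_assoc]

@[simp] lemma epsMap_apply (b : Fin t → ZMod 2) :
    epsMap t M b = fun p : Fin t × Fin M => b p.1 * (if (p.2 : ℕ) = 0 then 1 else 0) := rfl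

lemma sum_delta (hM : 1 ≤ M) :
    ∑ j : Fin M, (if (j : ℕ) = 0 then (1 : ZMod 2) else 0) = 1 := by
  have h : ∀ j : Fin M, (if (j : ℕ) = 0 then (1 : ZMod 2) else 0)
      = if j = (⟨0, by omega⟩ : Fin M) then 1 else 0 := by
    intro j; congr 1; simp [Fin.ext_iff]
  rw [Finset.sum_congr rfl fun j _ => h j]
  simp

lemma dot_embFst (a : Fin t → ZMod 2) (z : Fin t × Fin M → ZMod 2) :
    (embFst t M a) ⬝ᵥ z = a ⬝ᵥ (blockSum t M z) := by
  simp only [dotProduct, embFst_apply, blockSum_apply, Fintype.sum_prod_type, Finset.mul_sum]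

lemma blockSum_epsMap (hM : 1 ≤ M) (b : Fin t → ZMod 2) :
    blockSum t M (epsMap t M b) = b := by
  funext k
  simp only [blockSum_apply, epsMap_apply]
  rw [← Finset.mul_sum, sum_delta M hM, mul_one]

lemma ham_embFst (f : Fin t → ZMod 2) :
    hammingNorm (embFst t M f) = M * hammingNorm f := by
  simp only [hammingNorm, embFst_apply]
  show (univ.filter fun p : Fin t × Fin M => f p.1 ≠ 0).card = M * (univ.filter fun k => f k ≠ 0).card
  have h : (univ.filter fun p : Fin t × Fin M => f p.1 ≠ 0)
      = (univ.filter fun k => f k ≠ 0) ×ˢ univ := by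
    ext p; simp [Finset.mem_product]
  rw [h, Finset.card_product, Finset.card_univ, Fintype.card_fin, mul_comm]

lemma ham_blockSum_le (z : Fin t × Fin M → ZMod 2) :
    hammingNorm (blockSum t M z) ≤ hammingNorm z := by
  simp only [hammingNorm]
  have h : (univ.filter fun k => blockSum t M z k ≠ 0)
      ⊆ (univ.filter fun p : Fin t × Fin M => z p ≠ 0).image Prod.fst := by
    intro k hk
    simp only [Finset.mem_filter, Finset.mem_univ, true_and, blockSum_apply] at hk
    obtain ⟨j, hj⟩ : ∃ j, z (k, j) ≠ 0 := by
      by_contra hc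
      push_neg at hc
      exact (Finset.mem_filter.mp hk).2 (Finset.sum_eq_zero fun j _ => hc j)
    simp only [Finset.mem_image, Finset.mem_filter, Finset.mem_univ, true_and]
    exact ⟨(k, j), hj, rfl⟩
  exact le_trans (Finset.card_le_card h) Finset.card_image_le


lemma blockSum_single (k : Fin t) (j : Fin M) :
    blockSum t M (Pi.single (k, j) (1 : ZMod 2)) = Pi.single k 1 := by
  funext k'
  simp only [blockSum_apply, Pi.single_apply, Prod.ext_iff]
  by_cases hk : k' = k
  · subst hk
    simp [Finset.sum_ite_eq']
  · simp [hk]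

end CSSAux

open CSSAux


open Matrix Finset

/-- the CSS construction of Section VI. Let `A₂ ⊊ A₁ ⊆ F₂^t` be binary
linear codes and `M ≥ 2` even. With coordinates `F₂^{tM}` indexed by `Fin t × Fin M` (block
`k` being `{k} × Fin M`), let `C₂ = {a ⊗ 1_M : a ∈ A₂}` and
`C_Z = {(b ⊗ e₁) + w : b ∈ A₁^⊥, w ∈ W^{(1)} + ⋯ + W^{(t)}}` (where
`W^{(1)} + ⋯ + W^{(t)}` is the code of vectors all of whose blocks have even weight). Then:
(a) `C₂ ⟂ C_Z`, so `(C₂, C_Z)` defines a CSS code on `tM` qubits;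
(b) `dim C₂ = dim A₂`, `dim C_Z = (t − dim A₁) + t(M−1)`, and the code encodes
`tM − dim C₂ − dim C_Z = dim A₁ − dim A₂` logical qubits;
(c) `C_Z^⊥ = {f ⊗ 1_M : f ∈ A₁}`, every `v ∈ C_Z^⊥ ∖ C₂` has `w_H(v) ≥ M·d_min(A₁)`, and
every `z ∈ C₂^⊥ ∖ C_Z` has `w_H(z) ≥ d_min(A₂^⊥)`; hence the minimum distance is at least
`min(M·d_min(A₁), d_min(A₂^⊥))`. -/
theorem css_product_construction (t M : ℕ) (ht : 1 ≤ t) (hM : 2 ≤ M) (hMeven : Even M)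
    (A₂ A₁ : Submodule (ZMod 2) (Fin t → ZMod 2)) (hsub : A₂ < A₁)
    (C₂ CZ : Submodule (ZMod 2) (Fin t × Fin M → ZMod 2))
    (hC₂ : (C₂ : Set (Fin t × Fin M → ZMod 2))
      = {x | ∃ a ∈ A₂, x = fun p => a p.1})
    (hCZ : (CZ : Set (Fin t × Fin M → ZMod 2))
      = {z | ∃ b : Fin t → ZMod 2, (∀ v ∈ A₁, b ⬝ᵥ v = 0) ∧
          ∃ w : Fin t × Fin M → ZMod 2, (∀ k, ∑ j, w (k, j) = 0) ∧
            z = (fun p : Fin t × Fin M => b p.1 * (if (p.2 : ℕ) = 0 then 1 else 0)) + w}) :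
    -- (a)
    (∀ x ∈ C₂, ∀ z ∈ CZ, x ⬝ᵥ z = 0) ∧
    -- (b)
    Module.finrank (ZMod 2) C₂ = Module.finrank (ZMod 2) A₂ ∧
    Module.finrank (ZMod 2) CZ = (t - Module.finrank (ZMod 2) A₁) + t * (M - 1) ∧
    t * M - Module.finrank (ZMod 2) C₂ - Module.finrank (ZMod 2) CZ
      = Module.finrank (ZMod 2) A₁ - Module.finrank (ZMod 2) A₂ ∧
    -- (c)
    ({v : Fin t × Fin M → ZMod 2 | ∀ z ∈ CZ, v ⬝ᵥ z = 0}
      = {v : Fin t × Fin M → ZMod 2 | ∃ f ∈ A₁, v = fun p => f p.1}) ∧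
    (∀ v : Fin t × Fin M → ZMod 2, (∀ z ∈ CZ, v ⬝ᵥ z = 0) → v ∉ C₂ →
      M * sInf {k | ∃ a ∈ A₁, a ≠ 0 ∧ hammingNorm a = k} ≤ hammingNorm v) ∧
    (∀ z : Fin t × Fin M → ZMod 2, (∀ x ∈ C₂, z ⬝ᵥ x = 0) → z ∉ CZ →
      sInf {k | ∃ a : Fin t → ZMod 2, (∀ v ∈ A₂, a ⬝ᵥ v = 0) ∧ a ≠ 0 ∧ hammingNorm a = k}
        ≤ hammingNorm z) ∧
    (∀ v : Fin t × Fin M → ZMod 2,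
      ((∀ z ∈ CZ, v ⬝ᵥ z = 0) ∧ v ∉ C₂) ∨ ((∀ x ∈ C₂, v ⬝ᵥ x = 0) ∧ v ∉ CZ) →
      min (M * sInf {k | ∃ a ∈ A₁, a ≠ 0 ∧ hammingNorm a = k})
          (sInf {k | ∃ a : Fin t → ZMod 2,
            (∀ u ∈ A₂, a ⬝ᵥ u = 0) ∧ a ≠ 0 ∧ hammingNorm a = k})
        ≤ hammingNorm v) := by
  have hM1 : 1 ≤ M := by omega
  -- membership reformulations
  have hC₂' : ∀ x, x ∈ C₂ ↔ ∃ a ∈ A₂, x = embFst t M a := by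
    intro x
    rw [← SetLike.mem_coe, hC₂]
    simp only [Set.mem_setOf_eq, embFst_apply]
  have hker : ∀ w : Fin t × Fin M → ZMod 2,
      w ∈ LinearMap.ker (blockSum t M) ↔ ∀ k, ∑ j, w (k, j) = 0 := by
    intro w
    rw [LinearMap.mem_ker, funext_iff]
    simp
  have hCZ' : ∀ z, z ∈ CZ ↔ ∃ b ∈ dualCode A₁,
      ∃ w ∈ LinearMap.ker (blockSum t M), z = epsMap t M b + w := by
    intro z
    rw [← SetLike.mem_coe, hCZ]
    simp only [Set.mem_setOf_eq]
    constructor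
    · rintro ⟨b, hb, w, hw, rfl⟩
      exact ⟨b, hb, w, (hker w).mpr hw, rfl⟩
    · rintro ⟨b, hb, w, hw, rfl⟩
      exact ⟨b, hb, w, (hker w).mp hw, rfl⟩
  -- (a)
  have parta : ∀ x ∈ C₂, ∀ z ∈ CZ, x ⬝ᵥ z = 0 := by
    intro x hx z hz
    obtain ⟨a, ha, rfl⟩ := (hC₂' x).mp hx
    obtain ⟨b, hb, w, hw, rfl⟩ := (hCZ' z).mp hz
    rw [dot_embFst, map_add, blockSum_epsMap t M hM1, LinearMap.mem_ker.mp hw, add_zero,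
      dotProduct_comm]
    exact hb a (hsub.le ha)
  -- (b1)
  have hιinj : Function.Injective (embFst t M) := by
    intro a a' h
    funext k
    exact congrFun h (k, ⟨0, by omega⟩)
  have hC2eq : C₂ = LinearMap.range ((embFst t M) ∘ₗ A₂.subtype) := by
    ext x
    rw [hC₂' x, LinearMap.mem_range]
    constructor
    · rintro ⟨a, ha, rfl⟩
      exact ⟨⟨a, ha⟩, rfl⟩
    · rintro ⟨⟨a, ha⟩, rfl⟩
      exact ⟨a, ha, rfl⟩
  have partb1 : Module.finrank (ZMod 2) C₂ = Module.finrank (ZMod 2) A₂ := by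
    rw [hC2eq]
    exact LinearMap.finrank_range_of_inj (hιinj.comp A₂.injective_subtype)
  -- (b2)
  set D := dualCode A₁ with hDdef
  set K := LinearMap.ker (blockSum t M) with hKdef
  set L : ((Fin t → ZMod 2) × (Fin t × Fin M → ZMod 2)) →ₗ[ZMod 2]
      (Fin t × Fin M → ZMod 2) := (epsMap t M).coprod LinearMap.id with hLdef
  set L' := L ∘ₗ (D.subtype.prodMap K.subtype) with hL'def
  have hL'apply : ∀ x : ↥D × ↥K, L' x = epsMap t M (x.1 : Fin t → ZMod 2) + (x.2 : _) := by
    rintro ⟨⟨b, hb⟩, ⟨w, hw⟩⟩; rfl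
  have hCZeq : CZ = LinearMap.range L' := by
    ext z
    rw [hCZ' z, LinearMap.mem_range]
    constructor
    · rintro ⟨b, hb, w, hw, rfl⟩
      exact ⟨(⟨b, hb⟩, ⟨w, hw⟩), rfl⟩
    · rintro ⟨⟨⟨b, hb⟩, ⟨w, hw⟩⟩, rfl⟩
      exact ⟨b, hb, w, hw, hL'apply _⟩
  have hL'inj : Function.Injective L' := by
    rintro ⟨⟨b, hb⟩, ⟨w, hw⟩⟩ ⟨⟨b', hb'⟩, ⟨w', hw'⟩⟩ h
    rw [hL'apply, hL'apply] at h
    simp only at h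
    have hbb : b = b' := by
      have h2 := congrArg (blockSum t M) h
      rwa [map_add, map_add, blockSum_epsMap t M hM1, blockSum_epsMap t M hM1,
        LinearMap.mem_ker.mp hw, LinearMap.mem_ker.mp hw', add_zero, add_zero] at h2
    subst hbb
    have hww : w = w' := by
      exact add_left_cancel h
    subst hww
    rfl
  have hrankD : Module.finrank (ZMod 2) D = t - Module.finrank (ZMod 2) A₁ := by
    rw [hDdef, finrank_dualCode, Fintype.card_fin]
  have hsurjσ : Function.Surjective (blockSum t M) := by
    intro b
    exact ⟨epsMap t M b, blockSum_epsMap t M hM1 b⟩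
  have hrankK : Module.finrank (ZMod 2) K = t * (M - 1) := by
    have h1 := LinearMap.finrank_range_add_finrank_ker (blockSum t M)
    rw [← hKdef] at h1
    rw [LinearMap.range_eq_top.mpr hsurjσ, finrank_top] at h1
    have h2 : Module.finrank (ZMod 2) (Fin t × Fin M → ZMod 2) = t * M := by
      simp [Module.finrank_pi]
    have h3 : Module.finrank (ZMod 2) (Fin t → ZMod 2) = t := by
      simp [Module.finrank_pi]
    have h4 : t * (M - 1) + t = t * M := by
      have h5 : M - 1 + 1 = M := by omega
      calc t * (M - 1) + t = t * ((M - 1) + 1) := by ring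
        _ = t * M := by rw [h5]
    omega
  have partb2 : Module.finrank (ZMod 2) CZ
      = (t - Module.finrank (ZMod 2) A₁) + t * (M - 1) := by
    rw [hCZeq, LinearMap.finrank_range_of_inj hL'inj, Module.finrank_prod, hrankD, hrankK]
  -- (b3)
  have hd1le : Module.finrank (ZMod 2) A₁ ≤ t := by
    have h := Submodule.finrank_le A₁
    simpa [Module.finrank_pi] using h
  have hd21 : Module.finrank (ZMod 2) A₂ ≤ Module.finrank (ZMod 2) A₁ :=
    Submodule.finrank_mono hsub.le
  have partb3 : t * M - Module.finrank (ZMod 2) C₂ - Module.finrank (ZMod 2) CZ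
      = Module.finrank (ZMod 2) A₁ - Module.finrank (ZMod 2) A₂ := by
    rw [partb1, partb2]
    have h4 : t * (M - 1) + t = t * M := by
      have h5 : M - 1 + 1 = M := by omega
      calc t * (M - 1) + t = t * ((M - 1) + 1) := by ring
        _ = t * M := by rw [h5]
    omega
  -- (c1)
  have hdot : ∀ (f : Fin t → ZMod 2) (z : Fin t × Fin M → ZMod 2),
      (fun p : Fin t × Fin M => f p.1) ⬝ᵥ z = f ⬝ᵥ blockSum t M z := dot_embFst t M
  have partc1 : {v : Fin t × Fin M → ZMod 2 | ∀ z ∈ CZ, v ⬝ᵥ z = 0}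
      = {v : Fin t × Fin M → ZMod 2 | ∃ f ∈ A₁, v = fun p => f p.1} := by
    ext v
    simp only [Set.mem_setOf_eq]
    constructor
    · intro hv
      have hj0 : (0 : ℕ) < M := by omega
      have hconst : ∀ (k : Fin t) (j : Fin M), v (k, j) = v (k, ⟨0, hj0⟩) := by
        intro k j
        have hwmem : (Pi.single ((k, ⟨0, hj0⟩) : Fin t × Fin M) (1 : ZMod 2)
            + Pi.single (k, j) 1) ∈ CZ := by
          rw [hCZ']
          refine ⟨0, D.zero_mem,
            Pi.single ((k, ⟨0, hj0⟩) : Fin t × Fin M) (1 : ZMod 2) + Pi.single (k, j) 1,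
            ?_, by funext p; simp⟩
          rw [LinearMap.mem_ker, map_add, blockSum_single, blockSum_single]
          ext k'
          simp [Pi.single_apply, CharTwo.add_self_eq_zero]
        have h0 := hv _ hwmem
        rw [dotProduct_add, dotProduct_single_one, dotProduct_single_one] at h0
        have := neg_eq_of_add_eq_zero_right h0
        rw [← this, CharTwo.neg_eq]
      set f : Fin t → ZMod 2 := fun k => v (k, ⟨0, hj0⟩) with hfdef
      have hveq : v = embFst t M f := by
        funext p
        exact hconst p.1 p.2
      refine ⟨f, ?_, by rw [hveq]; rfl⟩
      rw [← dualCode_dualCode A₁]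
      intro b hb
      have hmem : epsMap t M b ∈ CZ := by
        rw [hCZ']
        refine ⟨b, hb, 0, K.zero_mem, by simp⟩
      have h0 := hv _ hmem
      rw [hveq, dot_embFst, blockSum_epsMap t M hM1] at h0
      exact h0
    · rintro ⟨f, hf, rfl⟩ z hz
      obtain ⟨b, hb, w, hw, rfl⟩ := (hCZ' z).mp hz
      show embFst t M f ⬝ᵥ (epsMap t M b + w) = 0
      rw [dot_embFst, map_add, blockSum_epsMap t M hM1, LinearMap.mem_ker.mp hw, add_zero,
        dotProduct_comm]
      exact hb f hf
  -- (c2)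
  have partc2 : ∀ v : Fin t × Fin M → ZMod 2, (∀ z ∈ CZ, v ⬝ᵥ z = 0) → v ∉ C₂ →
      M * sInf {k | ∃ a ∈ A₁, a ≠ 0 ∧ hammingNorm a = k} ≤ hammingNorm v := by
    intro v hv hvC₂
    have hvmem : v ∈ {v : Fin t × Fin M → ZMod 2 | ∃ f ∈ A₁, v = fun p => f p.1} := by
      rw [← partc1]; exact hv
    obtain ⟨f, hf, rfl⟩ := hvmem
    have hfA₂ : f ∉ A₂ := by
      intro hfa
      exact hvC₂ ((hC₂' _).mpr ⟨f, hfa, rfl⟩)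
    have hfne : f ≠ 0 := fun h => hfA₂ (h ▸ A₂.zero_mem)
    have hInf : sInf {k | ∃ a ∈ A₁, a ≠ 0 ∧ hammingNorm a = k} ≤ hammingNorm f :=
      Nat.sInf_le ⟨f, hf, hfne, rfl⟩
    calc M * sInf {k | ∃ a ∈ A₁, a ≠ 0 ∧ hammingNorm a = k}
        ≤ M * hammingNorm f := Nat.mul_le_mul_left M hInf
      _ = hammingNorm (embFst t M f) := (ham_embFst t M f).symm
      _ = hammingNorm (fun p : Fin t × Fin M => f p.1) := rfl
  -- (c3)
  have partc3 : ∀ z : Fin t × Fin M → ZMod 2, (∀ x ∈ C₂, z ⬝ᵥ x = 0) → z ∉ CZ →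
      sInf {k | ∃ a : Fin t → ZMod 2, (∀ v ∈ A₂, a ⬝ᵥ v = 0) ∧ a ≠ 0 ∧ hammingNorm a = k}
        ≤ hammingNorm z := by
    intro z hz hzCZ
    set b := blockSum t M z with hbdef
    have hbmem : ∀ v ∈ A₂, b ⬝ᵥ v = 0 := by
      intro a ha
      have h0 := hz _ ((hC₂' _).mpr ⟨a, ha, rfl⟩)
      rw [dotProduct_comm, dot_embFst] at h0
      rwa [dotProduct_comm]
    have hbne : b ≠ 0 := by
      intro hb0
      apply hzCZ
      rw [hCZ']
      exact ⟨0, D.zero_mem, z, LinearMap.mem_ker.mpr hb0, by funext p; simp⟩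
    have hInf : sInf {k | ∃ a : Fin t → ZMod 2,
        (∀ v ∈ A₂, a ⬝ᵥ v = 0) ∧ a ≠ 0 ∧ hammingNorm a = k} ≤ hammingNorm b :=
      Nat.sInf_le ⟨b, hbmem, hbne, rfl⟩
    exact le_trans hInf (ham_blockSum_le t M z)
  refine ⟨parta, partb1, partb2, partb3, partc1, partc2, partc3, ?_⟩
  rintro v (⟨h1, h2⟩ | ⟨h1, h2⟩)
  · exact le_trans (min_le_left _ _) (partc2 v h1 h2)
  · exact le_trans (min_le_right _ _) (partc3 v h1 h2)
end
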